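/- arXiv:1808.00929 — 4 statements merged into one kernel-verified Lean document; each statement's English description precedes it below -/
import Mathlib

section
/- Fix real constants p > 2, β > 0, Λ > 0, a nonempty compact set W ⊂ ℝ × [0,∞), and ε > 0. There exists T₀ > 0 such that for every T ≥ T₀ and every continuously differentiable U : [0,T] → ℝ² satisfying Condition I with U(t) ∈ W for all t ∈ [0,T], one has U₁(t) ≥ u_c − ε and U₂(t) ≥ (p·u_c/β) − ε for all t ∈ [T₀, T]. -/
open Set

/-- `F₁(u,v) = -p·u + β·v`. -/
noncomputable def F1 (p β : ℝ) (z : ℝ × ℝ) : ℝ := -p * z.1 + β * z.2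

/-- `F₂ᴸ(u,v) = 2p(p-1) - 2(p-1)v + 2pu(pu - βv) - 2βΛv`. -/
noncomputable def F2L (p β Λ : ℝ) (z : ℝ × ℝ) : ℝ :=
  2 * p * (p - 1) - 2 * (p - 1) * z.2 + 2 * p * z.1 * (p * z.1 - β * z.2) - 2 * β * Λ * z.2

/-- `F₂ᵁ(u,v) = 2p(p-1) - 2(p-1)v + 2pu(pu - βv) + 2βΛv`. -/
noncomputable def F2U (p β Λ : ℝ) (z : ℝ × ℝ) : ℝ :=
  2 * p * (p - 1) - 2 * (p - 1) * z.2 + 2 * p * z.1 * (p * z.1 - β * z.2) + 2 * β * Λ * z.2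

/-- The lower bounding vector field `Φ_L = (F₁, F₂ᴸ)`. -/
noncomputable def PhiL (p β Λ : ℝ) (z : ℝ × ℝ) : ℝ × ℝ := (F1 p β z, F2L p β Λ z)

/-- The upper bounding vector field `Φ_U = (F₁, F₂ᵁ)`. -/
noncomputable def PhiU (p β Λ : ℝ) (z : ℝ × ℝ) : ℝ × ℝ := (F1 p β z, F2U p β Λ z)

/-- **Condition I**: `U : [0,T] → ℝ²` is `C¹` with derivative `U'` satisfying
`U₁' = F₁(U)` and `F₂ᴸ(U) ≤ U₂' ≤ F₂ᵁ(U)` on `[0,T]`. -/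
def CondI (p β Λ T : ℝ) (U U' : ℝ → ℝ × ℝ) : Prop :=
  (∀ t ∈ Icc (0 : ℝ) T, HasDerivWithinAt U (U' t) (Icc (0 : ℝ) T) t) ∧
  ContinuousOn U' (Icc (0 : ℝ) T) ∧
  (∀ t ∈ Icc (0 : ℝ) T, (U' t).1 = F1 p β (U t)) ∧
  (∀ t ∈ Icc (0 : ℝ) T, F2L p β Λ (U t) ≤ (U' t).2 ∧ (U' t).2 ≤ F2U p β Λ (U t))

/-- `u_c = β(1 + βΛ/(p-1))⁻¹`. -/
noncomputable def uCrit (p β Λ : ℝ) : ℝ := β * (1 + β * Λ / (p - 1))⁻¹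

private lemma reach_stay (f f' : ℝ → ℝ) (s T L m K : ℝ)
    (hm : 0 < m) (hsT : s ≤ T) (hLK : 0 ≤ L + K)
    (hd : ∀ t ∈ Icc s T, HasDerivWithinAt f (f' t) (Icc s T) t)
    (hpush : ∀ t ∈ Icc s T, f t ≤ L → m ≤ f' t)
    (hK : -K ≤ f s) :
    ∀ t ∈ Icc (s + (L + K) / m) T, L ≤ f t := by
  have hcont : ContinuousOn f (Icc s T) := fun t ht => (hd t ht).continuousWithinAt
  have hderiv : ∀ r ∈ Ioo s T, HasDerivAt f (f' r) r := fun r hr =>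
    (hd r ⟨hr.1.le, hr.2.le⟩).hasDerivAt (Icc_mem_nhds hr.1 hr.2)
  have pers : ∀ t₀ ∈ Icc s T, L ≤ f t₀ → ∀ t ∈ Icc t₀ T, L ≤ f t := by
    intro t₀ ht₀ hf₀ t ht
    by_contra hlt
    push_neg at hlt
    have hsub : Icc t₀ t ⊆ Icc s T := Icc_subset_Icc ht₀.1 ht.2
    have hAne : (Icc t₀ t ∩ f ⁻¹' (Ici L)).Nonempty := ⟨t₀, ⟨le_refl _, ht.1⟩, hf₀⟩
    have hAbdd : BddAbove (Icc t₀ t ∩ f ⁻¹' (Ici L)) := bddAbove_Icc.mono inter_subset_left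
    have hAcl : IsClosed (Icc t₀ t ∩ f ⁻¹' (Ici L)) :=
      (hcont.mono hsub).preimage_isClosed_of_isClosed isClosed_Icc isClosed_Ici
    obtain ⟨t₂, ht₂A, ht₂eq⟩ : ∃ t₂, t₂ ∈ Icc t₀ t ∩ f ⁻¹' (Ici L) ∧ t₂ = sSup (Icc t₀ t ∩ f ⁻¹' (Ici L)) :=
      ⟨_, hAcl.csSup_mem hAne hAbdd, rfl⟩
    have hLt₂ : L ≤ f t₂ := ht₂A.2
    have ht₂t : t₂ < t := lt_of_le_of_ne ht₂A.1.2 (by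
      rintro rfl
      exact absurd hLt₂ (not_le.mpr hlt))
    have hst₂ : s ≤ t₂ := le_trans ht₀.1 ht₂A.1.1
    obtain ⟨ξ, hξ, hslope⟩ := exists_hasDerivAt_eq_slope f f' ht₂t
      (hcont.mono (Icc_subset_Icc hst₂ ht.2))
      (fun r hr => hderiv r ⟨lt_of_le_of_lt hst₂ hr.1, lt_of_lt_of_le hr.2 ht.2⟩)
    have hξA : ξ ∉ Icc t₀ t ∩ f ⁻¹' (Ici L) := fun h => by
      have := le_csSup hAbdd h
      rw [← ht₂eq] at this
      exact absurd this (not_le.mpr hξ.1)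
    have hξIcc : ξ ∈ Icc t₀ t := ⟨le_trans ht₂A.1.1 hξ.1.le, hξ.2.le⟩
    have hfξ : f ξ ≤ L := by
      by_contra h
      exact hξA ⟨hξIcc, le_of_lt (not_le.mp h)⟩
    have hm' : m ≤ f' ξ := hpush ξ (hsub hξIcc) hfξ
    have heq : f t - f t₂ = f' ξ * (t - t₂) := by
      rw [hslope, div_mul_cancel₀ _ (sub_ne_zero.mpr (ne_of_gt ht₂t))]
    have h1 : m * (t - t₂) ≤ f' ξ * (t - t₂) :=
      mul_le_mul_of_nonneg_right hm' (sub_pos.mpr ht₂t).le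
    have h0 : 0 < m * (t - t₂) := mul_pos hm (sub_pos.mpr ht₂t)
    linarith
  intro t ht
  by_cases hfs : L ≤ f s
  · exact pers s ⟨le_refl s, hsT⟩ hfs t
      ⟨le_trans (le_add_of_nonneg_right (div_nonneg hLK hm.le)) ht.1, ht.2⟩
  push_neg at hfs
  have hLK' : 0 < L + K := by
    rcases hLK.lt_or_eq with h | h
    · exact h
    · exfalso; linarith
  have hsτ : s < s + (L + K) / m := lt_add_of_pos_right s (div_pos hLK' hm)
  have hτt : s + (L + K) / m ≤ t := ht.1
  have htT : t ≤ T := ht.2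
  by_cases hreach : ∃ r ∈ Icc s (s + (L + K) / m), L ≤ f r
  · obtain ⟨r, hr, hfr⟩ := hreach
    exact pers r ⟨hr.1, le_trans hr.2 (le_trans hτt htT)⟩ hfr t ⟨le_trans hr.2 hτt, htT⟩
  push_neg at hreach
  exfalso
  obtain ⟨ξ, hξ, hslope⟩ := exists_hasDerivAt_eq_slope f f' hsτ
    (hcont.mono (Icc_subset_Icc (le_refl s) (le_trans hτt htT)))
    (fun r hr => hderiv r ⟨hr.1, lt_of_lt_of_le hr.2 (le_trans hτt htT)⟩)
  have hfξ : f ξ < L := hreach ξ ⟨hξ.1.le, hξ.2.le⟩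
  have hm' : m ≤ f' ξ := hpush ξ ⟨hξ.1.le, le_trans hξ.2.le (le_trans hτt htT)⟩ hfξ.le
  have heq : f (s + (L + K) / m) - f s = f' ξ * (s + (L + K) / m - s) := by
    rw [hslope, div_mul_cancel₀ _ (sub_ne_zero.mpr (ne_of_gt hsτ))]
  have hfτ : f (s + (L + K) / m) < L := hreach _ ⟨hsτ.le, le_refl _⟩
  have h1 : m * (s + (L + K) / m - s) ≤ f' ξ * (s + (L + K) / m - s) :=
    mul_le_mul_of_nonneg_right hm' (by linarith)
  have h2 : m * (s + (L + K) / m - s) = L + K := by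
    field_simp
    ring
  linarith


private lemma step_aux (p β Λ T M μ uc vc θ γ δ s a : ℝ) (U U' : ℝ → ℝ × ℝ)
    (hp : 2 < p) (hβ : 0 < β) (hΛ : 0 < Λ)
    (hμ : μ = p - 1 + β * Λ) (huc : uc = β * (p - 1) / μ) (hvc : vc = p * uc / β)
    (hθ : θ = 1 / (2 * (1 + 2 * β * uc)))
    (hcond : CondI p β Λ T U U')
    (hs0 : 0 ≤ s) (hM0 : 0 ≤ M)
    (hbound : ∀ t ∈ Icc (0:ℝ) T, |(U t).1| ≤ M ∧ 0 ≤ (U t).2)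
    (hγpos : 0 < γ) (hδpos : 0 < δ)
    (hδ1 : β * δ ≤ p * γ / 4) (hδ2 : δ ≤ θ * uc) (hδ3 : δ ≤ vc / 2)
    (ha0 : 0 ≤ a) (hauc : a ≤ uc) (hgap : γ ≤ uc - a)
    (hu2 : ∀ t ∈ Icc s T, a ^ 2 ≤ ((U t).1) ^ 2) :
    ∀ t ∈ Icc (s + (vc + p * uc ^ 2) / (2 * μ * δ) + (uc + M) / min (p * δ) (p * γ / 4)) T,
      a + θ * (uc - a) ≤ (U t).1 := by
  have hp1 : (0:ℝ) < p - 1 := by linarith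
  have hp0 : (0:ℝ) < p := by linarith
  have hμ0 : 0 < μ := by rw [hμ]; have := mul_pos hβ hΛ; linarith
  have huc0 : 0 < uc := by rw [huc]; exact div_pos (mul_pos hβ hp1) hμ0
  have hvc0 : 0 < vc := by rw [hvc]; exact div_pos (mul_pos hp0 huc0) hβ
  have hβvc : β * vc = p * uc := by rw [hvc]; field_simp
  have hμvc : μ * vc = p * (p - 1) := by
    rw [hvc, huc]; field_simp [hβ.ne', hμ0.ne']
  have h2βuc : (0:ℝ) < 1 + 2 * β * uc := by
    have := mul_pos hβ huc0; linarith
  have hθ0 : 0 < θ := by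
    rw [hθ]; exact div_pos one_pos (by linarith)
  have hθhalf : θ * (1 + 2 * β * uc) = 1 / 2 := by
    rw [hθ]; field_simp
  have hθ1 : θ ≤ 1 / 2 := by
    have h := mul_nonneg (mul_nonneg hβ.le huc0.le) hθ0.le
    linarith [hθhalf, h]
  have hpδ0 : 0 < p * δ := mul_pos hp0 hδpos
  have hpγ0 : (0:ℝ) < p * γ / 4 := by
    have := mul_pos hp0 hγpos; linarith
  have hm'0 : 0 < min (p * δ) (p * γ / 4) := lt_min hpδ0 hpγ0
  have hμδ0 : (0:ℝ) < 2 * μ * δ := by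
    have := mul_pos hμ0 hδpos; linarith
  have hΔw0 : 0 < (vc + p * uc ^ 2) / (2 * μ * δ) :=
    div_pos (by have := mul_pos hp0 (pow_pos huc0 2); linarith) hμδ0
  have hΔu0 : 0 < (uc + M) / min (p * δ) (p * γ / 4) :=
    div_pos (by linarith) hm'0
  obtain ⟨L₁, hL₁⟩ : ∃ x : ℝ, x = vc + p * a ^ 2 - δ := ⟨_, rfl⟩
  obtain ⟨L₂, hL₂⟩ : ∃ x : ℝ, x = a + θ * (uc - a) := ⟨_, rfl⟩
  have hg0 : 0 ≤ uc - a := by linarith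
  have hθg : 0 ≤ θ * (uc - a) := mul_nonneg hθ0.le hg0
  have hL₂0 : 0 ≤ L₂ := by rw [hL₂]; linarith
  have hL₂uc : L₂ ≤ uc := by
    have h := mul_nonneg (by linarith : (0:ℝ) ≤ 1 - θ) hg0
    rw [hL₂]; linarith [h]
  have hδL₂ : δ ≤ L₂ := by
    have h := mul_nonneg ha0 (by linarith : (0:ℝ) ≤ 1 - θ)
    rw [hL₂]; linarith [h, hδ2]
  have hpa2 : 0 ≤ p * a ^ 2 := mul_nonneg hp0.le (sq_nonneg a)
  by_cases hsT : s ≤ T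
  · -- Phase 1 : the quantity w = v + p u² rises above L₁
    have hLK1 : (0:ℝ) ≤ L₁ + 0 := by rw [hL₁]; linarith
    have hd1 : ∀ t ∈ Icc s T, HasDerivWithinAt
        (fun r => (U r).2 + p * ((U r).1) ^ 2)
        ((U' t).2 + p * (2 * (U t).1 * (U' t).1)) (Icc s T) t := by
      intro t ht
      have ht0 : t ∈ Icc (0:ℝ) T := ⟨le_trans hs0 ht.1, ht.2⟩
      have hU := (hcond.1 t ht0).mono (Icc_subset_Icc_left hs0)
      have hu1 : HasDerivWithinAt (fun r => (U r).1) (U' t).1 (Icc s T) t := hU.fst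
      have hv1 : HasDerivWithinAt (fun r => (U r).2) (U' t).2 (Icc s T) t := hU.snd
      have h := hv1.add ((hu1.pow 2).const_mul p)
      refine h.congr_deriv ?_
      push_cast
      ring
    have hpush1 : ∀ t ∈ Icc s T, (U t).2 + p * ((U t).1) ^ 2 ≤ L₁ →
        2 * μ * δ ≤ (U' t).2 + p * (2 * (U t).1 * (U' t).1) := by
      intro t ht hle
      have ht0 : t ∈ Icc (0:ℝ) T := ⟨le_trans hs0 ht.1, ht.2⟩
      have h1 : (U' t).1 = -p * (U t).1 + β * (U t).2 := hcond.2.2.1 t ht0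
      have h2 : F2L p β Λ (U t) ≤ (U' t).2 := (hcond.2.2.2 t ht0).1
      rw [F2L] at h2
      have hu2t := hu2 t ht
      have hpu : p * a ^ 2 ≤ p * ((U t).1) ^ 2 := mul_le_mul_of_nonneg_left hu2t hp0.le
      have hv : (U t).2 ≤ vc - δ := by rw [hL₁] at hle; linarith
      have r1 : 2 * p * (p - 1) - 2 * (p - 1) * (U t).2 - 2 * β * Λ * (U t).2 ≤
          (U' t).2 + p * (2 * (U t).1 * (U' t).1) := by
        rw [h1]
        linarith [h2]
      have r2 : 2 * μ * (U t).2 = 2 * (p - 1) * (U t).2 + 2 * β * Λ * (U t).2 := by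
        rw [hμ]; ring
      have r3 : 2 * μ * (U t).2 ≤ 2 * μ * (vc - δ) :=
        mul_le_mul_of_nonneg_left hv (by linarith)
      linarith [hμvc]
    have hK1 : -(0:ℝ) ≤ (U s).2 + p * ((U s).1) ^ 2 := by
      have h := (hbound s ⟨hs0, hsT⟩).2
      have := mul_nonneg hp0.le (sq_nonneg (U s).1)
      linarith
    have phase1 := reach_stay (fun r => (U r).2 + p * ((U r).1) ^ 2)
      (fun t => (U' t).2 + p * (2 * (U t).1 * (U' t).1)) s T L₁ (2 * μ * δ) 0
      hμδ0 hsT hLK1 hd1 hpush1 hK1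
    by_cases hs'T : s + (vc + p * uc ^ 2) / (2 * μ * δ) ≤ T
    · obtain ⟨s', hs'⟩ : ∃ x : ℝ, x = s + (vc + p * uc ^ 2) / (2 * μ * δ) := ⟨_, rfl⟩
      rw [← hs'] at hs'T
      have hs'0 : 0 ≤ s' := by rw [hs']; linarith
      have hwlow : ∀ t ∈ Icc s' T, L₁ ≤ (U t).2 + p * ((U t).1) ^ 2 := by
        intro t ht
        have hnum : L₁ + 0 ≤ vc + p * uc ^ 2 := by
          have h := pow_le_pow_left₀ ha0 hauc 2
          have := mul_le_mul_of_nonneg_left h hp0.le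
          rw [hL₁]; linarith
        have h9 : (L₁ + 0) / (2 * μ * δ) ≤ (vc + p * uc ^ 2) / (2 * μ * δ) :=
          (div_le_div_iff_of_pos_right hμδ0).mpr hnum
        refine phase1 t ⟨?_, ht.2⟩
        have := ht.1
        rw [hs'] at this
        linarith
      -- Phase 2 : u rises above L₂
      have hd2 : ∀ t ∈ Icc s' T, HasDerivWithinAt (fun r => (U r).1)
          ((U' t).1) (Icc s' T) t := by
        intro t ht
        have ht0 : t ∈ Icc (0:ℝ) T := ⟨le_trans hs'0 ht.1, ht.2⟩
        exact ((hcond.1 t ht0).mono (Icc_subset_Icc_left hs'0)).fst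
      have hK2 : -M ≤ (U s').1 := by
        have h := (hbound s' ⟨hs'0, hs'T⟩).1
        have := neg_abs_le (U s').1
        linarith
      -- the key algebraic estimate
      have hm1 : p * γ / 4 ≤ β * vc + β * p * a ^ 2 - β * δ - p * L₂ - β * p * L₂ ^ 2 := by
        have key1 : β * θ * (uc - a) * (L₂ + a) ≤ β * θ * (uc - a) * (2 * uc) :=
          mul_le_mul_of_nonneg_left (by linarith)
            (mul_nonneg (mul_nonneg hβ.le hθ0.le) hg0)
        have key2 : θ * (1 + 2 * β * uc) * (uc - a) = (uc - a) / 2 := by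
          rw [hθhalf]; ring
        have e1 : p * uc + β * p * a ^ 2 - p * L₂ - β * p * L₂ ^ 2 =
            p * ((1 - θ) * (uc - a)) - p * (β * θ * (uc - a) * (L₂ + a)) := by
          rw [hL₂]; ring
        have e2 : p * (β * θ * (uc - a) * (L₂ + a)) ≤ p * (β * θ * (uc - a) * (2 * uc)) :=
          mul_le_mul_of_nonneg_left key1 hp0.le
        have e3 : p * ((1 - θ) * (uc - a)) - p * (β * θ * (uc - a) * (2 * uc)) =
            p * ((uc - a) - θ * (1 + 2 * β * uc) * (uc - a)) := by ring
        rw [key2] at e3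
        have e4 : p * γ ≤ p * (uc - a) := mul_le_mul_of_nonneg_left hgap hp0.le
        have e5 : p * ((uc - a) - (uc - a) / 2) = p * (uc - a) / 2 := by ring
        linarith [hβvc]
      have hpush2 : ∀ t ∈ Icc s' T, (U t).1 ≤ L₂ →
          min (p * δ) (p * γ / 4) ≤ (U' t).1 := by
        intro t ht hle
        have ht0 : t ∈ Icc (0:ℝ) T := ⟨le_trans hs'0 ht.1, ht.2⟩
        have h1 : (U' t).1 = -p * (U t).1 + β * (U t).2 := hcond.2.2.1 t ht0
        have hv0 : 0 ≤ (U t).2 := (hbound t ht0).2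
        rcases le_or_gt (U t).1 (-δ) with hcase | hcase
        · have q0 : p * (U t).1 ≤ p * (-δ) := mul_le_mul_of_nonneg_left hcase hp0.le
          have q1 : min (p * δ) (p * γ / 4) ≤ p * δ := min_le_left _ _
          have q2 : 0 ≤ β * (U t).2 := mul_nonneg hβ.le hv0
          rw [h1]; linarith
        · have hw := hwlow t ht
          have hu2L : ((U t).1) ^ 2 ≤ L₂ ^ 2 := sq_le_sq' (by linarith) hle
          have q2 : vc + p * a ^ 2 - δ - p * ((U t).1) ^ 2 ≤ (U t).2 := by
            rw [hL₁] at hw; linarith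
          have q3 : β * (vc + p * a ^ 2 - δ - p * ((U t).1) ^ 2) ≤ β * (U t).2 :=
            mul_le_mul_of_nonneg_left q2 hβ.le
          have q4 : p * ((U t).1) ^ 2 ≤ p * L₂ ^ 2 := mul_le_mul_of_nonneg_left hu2L hp0.le
          have q4' : β * (p * ((U t).1) ^ 2) ≤ β * (p * L₂ ^ 2) :=
            mul_le_mul_of_nonneg_left q4 hβ.le
          have q5 : p * (U t).1 ≤ p * L₂ := mul_le_mul_of_nonneg_left hle hp0.le
          have q6 : min (p * δ) (p * γ / 4) ≤ p * γ / 4 := min_le_right _ _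
          rw [h1]
          linarith [q3, q4', q5, q6, hm1]
      have phase2 := reach_stay (fun r => (U r).1) (fun t => (U' t).1) s' T L₂
        (min (p * δ) (p * γ / 4)) M hm'0 hs'T (by linarith) hd2 hpush2 hK2
      intro t ht
      have hnum2 : L₂ + M ≤ uc + M := by linarith
      have h10 : (L₂ + M) / min (p * δ) (p * γ / 4) ≤
          (uc + M) / min (p * δ) (p * γ / 4) := (div_le_div_iff_of_pos_right hm'0).mpr hnum2
      rw [← hL₂]
      refine phase2 t ⟨?_, ht.2⟩
      rw [hs']
      have := ht.1
      linarith
    · intro t ht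
      exfalso
      have h1 := ht.1
      have h2 := ht.2
      push_neg at hs'T
      linarith
  · intro t ht
    exfalso
    have h1 := ht.1
    have h2 := ht.2
    push_neg at hsT
    linarith


set_option maxHeartbeats 1000000 in
/-- **Absorption.** For every nonempty compact `W ⊂ ℝ × [0,∞)` and every `ε > 0` there
is a time `T₀` such that every trajectory satisfying Condition I that stays in `W`
satisfies `U₁(t) ≥ u_c − ε` and `U₂(t) ≥ p·u_c/β − ε` for all `t ∈ [T₀, T]`. -/
theorem absorption
    (p β Λ : ℝ) (hp : 2 < p) (hβ : 0 < β) (hΛ : 0 < Λ)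
    (W : Set (ℝ × ℝ)) (hWc : IsCompact W) (hWne : W.Nonempty)
    (hWpos : ∀ z ∈ W, 0 ≤ z.2)
    (ε : ℝ) (hε : 0 < ε) :
    ∃ T₀ > (0 : ℝ), ∀ T ≥ T₀, ∀ U U' : ℝ → ℝ × ℝ,
      CondI p β Λ T U U' → (∀ t ∈ Icc (0 : ℝ) T, U t ∈ W) →
      ∀ t ∈ Icc T₀ T,
        uCrit p β Λ - ε ≤ (U t).1 ∧ p * uCrit p β Λ / β - ε ≤ (U t).2 := by
  have hp1 : (0:ℝ) < p - 1 := by linarith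
  have hp0 : (0:ℝ) < p := by linarith
  obtain ⟨R, hR⟩ := hWc.isBounded.subset_closedBall 0
  obtain ⟨μ, hμ⟩ : ∃ x : ℝ, x = p - 1 + β * Λ := ⟨_, rfl⟩
  obtain ⟨uc, huc⟩ : ∃ x : ℝ, x = β * (p - 1) / μ := ⟨_, rfl⟩
  obtain ⟨vc, hvc⟩ : ∃ x : ℝ, x = p * uc / β := ⟨_, rfl⟩
  obtain ⟨θ, hθ⟩ : ∃ x : ℝ, x = 1 / (2 * (1 + 2 * β * uc)) := ⟨_, rfl⟩
  have hμ0 : 0 < μ := by rw [hμ]; have := mul_pos hβ hΛ; linarith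
  have huc0 : 0 < uc := by rw [huc]; exact div_pos (mul_pos hβ hp1) hμ0
  have hvc0 : 0 < vc := by rw [hvc]; exact div_pos (mul_pos hp0 huc0) hβ
  have hβvc : β * vc = p * uc := by rw [hvc]; field_simp
  have hμvc : μ * vc = p * (p - 1) := by
    rw [hvc, huc]; field_simp [hβ.ne', hμ0.ne']
  have h2βuc : (0:ℝ) < 1 + 2 * β * uc := by
    have := mul_pos hβ huc0; linarith
  have hθ0 : 0 < θ := by
    rw [hθ]; exact div_pos one_pos (by linarith)
  have hθhalf : θ * (1 + 2 * β * uc) = 1 / 2 := by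
    rw [hθ]; field_simp
  have hθ1 : θ ≤ 1 / 2 := by
    have h := mul_nonneg (mul_nonneg hβ.le huc0.le) hθ0.le
    linarith [hθhalf, h]
  have hr0 : (0:ℝ) ≤ 1 - θ := by linarith
  have hr1 : 1 - θ < 1 := by linarith
  have hucrit : uCrit p β Λ = uc := by
    rw [uCrit, huc, hμ]
    rw [inv_eq_one_div]
    field_simp
  -- bound on the compact set
  obtain ⟨M, hM⟩ : ∃ x : ℝ, x = max R 0 := ⟨_, rfl⟩
  have hM0 : 0 ≤ M := by rw [hM]; exact le_max_right _ _
  have hMW : ∀ z ∈ W, |z.1| ≤ M := by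
    intro z hz
    have h1 := hR hz
    rw [Metric.mem_closedBall, dist_zero_right] at h1
    have h2 : |z.1| ≤ R := le_trans (by simpa using norm_fst_le z) h1
    rw [hM]
    exact le_trans h2 (le_max_left _ _)
  -- small parameters
  obtain ⟨ε₂, hε₂⟩ : ∃ x : ℝ, x = min ε (vc / 2) := ⟨_, rfl⟩
  have hε₂0 : 0 < ε₂ := by rw [hε₂]; exact lt_min hε (by linarith)
  have hε₂ε : ε₂ ≤ ε := by rw [hε₂]; exact min_le_left _ _
  have hε₂v : ε₂ ≤ vc / 2 := by rw [hε₂]; exact min_le_right _ _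
  obtain ⟨εg, hεg⟩ : ∃ x : ℝ, x = min ε (β * ε₂ / (2 * p)) := ⟨_, rfl⟩
  have hεg0 : 0 < εg := by
    rw [hεg]
    exact lt_min hε (div_pos (mul_pos hβ hε₂0) (by linarith))
  have hεgε : εg ≤ ε := by rw [hεg]; exact min_le_left _ _
  have hεgβ : εg ≤ β * ε₂ / (2 * p) := by rw [hεg]; exact min_le_right _ _
  obtain ⟨N₀, hN₀⟩ := exists_pow_lt_of_lt_one (div_pos hεg0 huc0) hr1
  obtain ⟨N, hN⟩ : ∃ n : ℕ, n = N₀ + 1 := ⟨_, rfl⟩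
  obtain ⟨γ, hγ⟩ : ∃ x : ℝ, x = (1 - θ) ^ N * uc := ⟨_, rfl⟩
  have hγ0 : 0 < γ := by
    rw [hγ]
    exact mul_pos (pow_pos (by linarith) N) huc0
  have hγεg : γ ≤ εg := by
    have h1 : (1 - θ) ^ N ≤ (1 - θ) ^ N₀ :=
      pow_le_pow_of_le_one hr0 (by linarith) (by omega)
    have h2 : (1 - θ) ^ N * uc ≤ (1 - θ) ^ N₀ * uc :=
      mul_le_mul_of_nonneg_right h1 huc0.le
    have h3 : (1 - θ) ^ N₀ * uc ≤ (εg / uc) * uc :=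
      mul_le_mul_of_nonneg_right hN₀.le huc0.le
    have h4 : (εg / uc) * uc = εg := div_mul_cancel₀ _ huc0.ne'
    rw [hγ]
    linarith
  have hγuc : γ ≤ uc := by
    have h1 : (1 - θ) ^ N ≤ 1 := pow_le_one₀ hr0 (by linarith)
    have h2 : (1 - θ) ^ N * uc ≤ 1 * uc := mul_le_mul_of_nonneg_right h1 huc0.le
    rw [hγ]
    linarith
  obtain ⟨δ, hδ⟩ : ∃ x : ℝ, x = min (min (p * γ / (4 * β)) (θ * uc)) (vc / 2) := ⟨_, rfl⟩
  have hδ0 : 0 < δ := by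
    rw [hδ]
    exact lt_min (lt_min (div_pos (mul_pos hp0 hγ0) (by linarith)) (mul_pos hθ0 huc0))
      (by linarith)
  have hδ1 : β * δ ≤ p * γ / 4 := by
    have h1 : δ ≤ p * γ / (4 * β) := by
      rw [hδ]; exact le_trans (min_le_left _ _) (min_le_left _ _)
    have h2 : β * δ ≤ β * (p * γ / (4 * β)) := mul_le_mul_of_nonneg_left h1 hβ.le
    have h3 : β * (p * γ / (4 * β)) = p * γ / 4 := by field_simp
    linarith
  have hδ2 : δ ≤ θ * uc := by
    rw [hδ]; exact le_trans (min_le_left _ _) (min_le_right _ _)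
  have hδ3 : δ ≤ vc / 2 := by rw [hδ]; exact min_le_right _ _
  -- the step duration and the final duration
  obtain ⟨Δ, hΔ⟩ : ∃ x : ℝ,
      x = (vc + p * uc ^ 2) / (2 * μ * δ) + (uc + M) / min (p * δ) (p * γ / 4) := ⟨_, rfl⟩
  have hm'0 : 0 < min (p * δ) (p * γ / 4) :=
    lt_min (mul_pos hp0 hδ0) (by have := mul_pos hp0 hγ0; linarith)
  have hΔ0 : 0 < Δ := by
    rw [hΔ]
    have h1 : 0 < (vc + p * uc ^ 2) / (2 * μ * δ) :=
      div_pos (by have := mul_pos hp0 (pow_pos huc0 2); linarith)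
        (by have := mul_pos hμ0 hδ0; linarith)
    have h2 : 0 < (uc + M) / min (p * δ) (p * γ / 4) := div_pos (by linarith) hm'0
    linarith
  obtain ⟨Δv, hΔv⟩ : ∃ x : ℝ, x = vc / (2 * μ * ε₂) := ⟨_, rfl⟩
  have hμε0 : (0:ℝ) < 2 * μ * ε₂ := by have := mul_pos hμ0 hε₂0; linarith
  have hΔv0 : 0 < Δv := by rw [hΔv]; exact div_pos hvc0 hμε0
  refine ⟨(N:ℝ) * Δ + Δv, ?_, ?_⟩
  · have h1 : (0:ℝ) ≤ (N:ℝ) * Δ := mul_nonneg (Nat.cast_nonneg _) hΔ0.le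
    linarith
  intro T hT U U' hcond hW
  have hbound : ∀ t ∈ Icc (0:ℝ) T, |(U t).1| ≤ M ∧ 0 ≤ (U t).2 :=
    fun t ht => ⟨hMW _ (hW t ht), hWpos _ (hW t ht)⟩
  have hNΔ0 : (0:ℝ) ≤ (N:ℝ) * Δ := mul_nonneg (Nat.cast_nonneg _) hΔ0.le
  have hTbig : (N:ℝ) * Δ + Δv ≤ T := hT
  -- the iteration
  have key : ∀ n : ℕ, n ≤ N → ∀ t ∈ Icc ((n:ℝ) * Δ) T,
      (uc - uc * (1 - θ) ^ n) ^ 2 ≤ ((U t).1) ^ 2 ∧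
        (uc - uc * (1 - θ) ^ n ≤ (U t).1 ∨ n = 0) := by
    intro n
    induction n with
    | zero =>
      intro _ t ht
      constructor
      · have h0 : uc - uc * (1 - θ) ^ 0 = 0 := by norm_num
        rw [h0]
        simpa using sq_nonneg ((U t).1)
      · exact Or.inr rfl
    | succ n ih =>
      intro hn t ht
      have hpown : (0:ℝ) ≤ (1 - θ) ^ n := pow_nonneg hr0 n
      have hpown1 : (1 - θ) ^ n ≤ 1 := pow_le_one₀ hr0 (by linarith)
      have hucn : 0 ≤ uc * (1 - θ) ^ n := mul_nonneg huc0.le hpown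
      have hucn1 : uc * (1 - θ) ^ n ≤ uc * 1 :=
        mul_le_mul_of_nonneg_left hpown1 huc0.le
      have ha0n : 0 ≤ uc - uc * (1 - θ) ^ n := by linarith
      have haucn : uc - uc * (1 - θ) ^ n ≤ uc := by linarith
      have hgapn : γ ≤ uc - (uc - uc * (1 - θ) ^ n) := by
        have h1 : (1 - θ) ^ N ≤ (1 - θ) ^ n :=
          pow_le_pow_of_le_one hr0 (by linarith) (by omega)
        have h2 : (1 - θ) ^ N * uc ≤ (1 - θ) ^ n * uc :=
          mul_le_mul_of_nonneg_right h1 huc0.le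
        rw [hγ] at *
        linarith
      have hstep := step_aux p β Λ T M μ uc vc θ γ δ ((n:ℝ) * Δ)
        (uc - uc * (1 - θ) ^ n) U U' hp hβ hΛ hμ huc hvc hθ hcond
        (mul_nonneg (Nat.cast_nonneg _) hΔ0.le) hM0 hbound hγ0 hδ0 hδ1 hδ2 hδ3
        ha0n haucn hgapn (fun r hr => (ih (by omega) r hr).1)
      have hmem : t ∈ Icc ((n:ℝ) * Δ + (vc + p * uc ^ 2) / (2 * μ * δ)
          + (uc + M) / min (p * δ) (p * γ / 4)) T := by
        refine ⟨?_, ht.2⟩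
        have h := ht.1
        push_cast at h
        have h2 : ((n:ℝ) + 1) * Δ = (n:ℝ) * Δ + Δ := by ring
        rw [h2] at h
        linarith [hΔ]
      have hres := hstep t hmem
      have hArec : uc - uc * (1 - θ) ^ (n + 1) =
          (uc - uc * (1 - θ) ^ n) + θ * (uc - (uc - uc * (1 - θ) ^ n)) := by
        rw [pow_succ]
        ring
      have hres' : uc - uc * (1 - θ) ^ (n + 1) ≤ (U t).1 := by
        rw [hArec]
        exact hres
      have ha0n1 : 0 ≤ uc - uc * (1 - θ) ^ (n + 1) := by
        rw [hArec]
        have : 0 ≤ θ * (uc - (uc - uc * (1 - θ) ^ n)) :=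
          mul_nonneg hθ0.le (by linarith)
        linarith
      exact ⟨pow_le_pow_left₀ ha0n1 hres' 2, Or.inl hres'⟩
  have hNne : N ≠ 0 := by omega
  have hulow : ∀ t ∈ Icc ((N:ℝ) * Δ) T, uc - γ ≤ (U t).1 := by
    intro t ht
    have h := ((key N le_rfl t ht).2).resolve_right hNne
    rw [hγ]
    have heq : uc * (1 - θ) ^ N = (1 - θ) ^ N * uc := by ring
    rw [← heq]
    exact h
  -- final phase : v rises above vc - ε₂
  have hNΔT : (N:ℝ) * Δ ≤ T := by linarith
  have hd3 : ∀ t ∈ Icc ((N:ℝ) * Δ) T, HasDerivWithinAt (fun r => (U r).2)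
      ((U' t).2) (Icc ((N:ℝ) * Δ) T) t := by
    intro t ht
    have ht0 : t ∈ Icc (0:ℝ) T := ⟨le_trans hNΔ0 ht.1, ht.2⟩
    exact ((hcond.1 t ht0).mono (Icc_subset_Icc_left hNΔ0)).snd
  have hpush3 : ∀ t ∈ Icc ((N:ℝ) * Δ) T, (U t).2 ≤ vc - ε₂ →
      2 * μ * ε₂ ≤ (U' t).2 := by
    intro t ht hle
    have ht0 : t ∈ Icc (0:ℝ) T := ⟨le_trans hNΔ0 ht.1, ht.2⟩
    have h2 : F2L p β Λ (U t) ≤ (U' t).2 := (hcond.2.2.2 t ht0).1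
    rw [F2L] at h2
    have haN : uc - γ ≤ (U t).1 := hulow t ht
    have hu0 : 0 ≤ (U t).1 := by linarith [hγuc]
    have hpγ2 : p * γ ≤ β * ε₂ / 2 := by
      have h1 : γ ≤ β * ε₂ / (2 * p) := le_trans hγεg hεgβ
      have h3 : p * γ ≤ p * (β * ε₂ / (2 * p)) := mul_le_mul_of_nonneg_left h1 hp0.le
      have h4 : p * (β * ε₂ / (2 * p)) = β * ε₂ / 2 := by field_simp
      linarith
    have hpu : p * (uc - γ) ≤ p * (U t).1 := mul_le_mul_of_nonneg_left haN hp0.le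
    have hβv : β * (U t).2 ≤ β * (vc - ε₂) := mul_le_mul_of_nonneg_left hle hβ.le
    have hpuβv : 0 ≤ p * (U t).1 - β * (U t).2 := by
      linarith [hβvc, mul_pos hβ hε₂0]
    have hQ : 0 ≤ 2 * p * (U t).1 * (p * (U t).1 - β * (U t).2) :=
      mul_nonneg (mul_nonneg (by linarith) hu0) hpuβv
    have r2 : 2 * μ * (U t).2 = 2 * (p - 1) * (U t).2 + 2 * β * Λ * (U t).2 := by
      rw [hμ]; ring
    have r3 : 2 * μ * (U t).2 ≤ 2 * μ * (vc - ε₂) :=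
      mul_le_mul_of_nonneg_left hle (by linarith)
    linarith [h2, hQ, r2, r3, hμvc]
  have hK3 : -(0:ℝ) ≤ (U ((N:ℝ) * Δ)).2 := by
    have h := (hbound ((N:ℝ) * Δ) ⟨hNΔ0, hNΔT⟩).2
    linarith
  have hvphase := reach_stay (fun r => (U r).2) (fun t => (U' t).2)
    ((N:ℝ) * Δ) T (vc - ε₂) (2 * μ * ε₂) 0 hμε0 hNΔT (by linarith) hd3 hpush3 hK3
  -- conclusion
  intro t ht
  have htT : t ∈ Icc ((N:ℝ) * Δ) T := ⟨by linarith [ht.1, hΔv0.le], ht.2⟩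
  have hu := hulow t htT
  have hdivle : (vc - ε₂ + 0) / (2 * μ * ε₂) ≤ Δv := by
    rw [hΔv]
    exact (div_le_div_iff_of_pos_right hμε0).mpr (by linarith)
  have htv : t ∈ Icc ((N:ℝ) * Δ + (vc - ε₂ + 0) / (2 * μ * ε₂)) T :=
    ⟨by linarith [ht.1], ht.2⟩
  have hv := hvphase t htv
  constructor
  · rw [hucrit]
    have : γ ≤ ε := le_trans hγεg hεgε
    linarith
  · have hpvc : p * uCrit p β Λ / β = vc := by rw [hucrit, hvc]
    rw [hpvc]
    linarith
end

section
/- Fix real constants p > 2, β > 0, Λ > 0 and a nonempty compact set W ⊂ ℝ × [0,∞). There exists T₀ > 0 such that for every T ≥ T₀ and every continuously differentiable U : [0,T] → ℝ² satisfying Condition I with U(t) ∈ W for all t ∈ [0,T] and with U₁(0) < 0, there exists t* ∈ (0, T₀] with U₁(t*) = 0, U₂(t*) > 0, and U₁(t) < 0 for all t ∈ [0, t*). -/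
open Set

lemma myfst {U : ℝ → ℝ × ℝ} {d : ℝ × ℝ} {s : Set ℝ} {x : ℝ}
    (h : HasDerivWithinAt U d s x) : HasDerivWithinAt (fun t => (U t).1) d.1 s x := by
  have h2 := (h.hasFDerivWithinAt).fst
  have h3 := h2.hasDerivWithinAt
  simpa using h3

lemma mysnd {U : ℝ → ℝ × ℝ} {d : ℝ × ℝ} {s : Set ℝ} {x : ℝ}
    (h : HasDerivWithinAt U d s x) : HasDerivWithinAt (fun t => (U t).2) d.2 s x := by
  have h2 := (h.hasFDerivWithinAt).snd
  have h3 := h2.hasDerivWithinAt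
  simpa using h3

lemma grow {T : ℝ} {f f' : ℝ → ℝ}
    (hd : ∀ r ∈ Icc (0:ℝ) T, HasDerivWithinAt f (f' r) (Icc (0:ℝ) T) r)
    {s t C : ℝ} (h0s : 0 ≤ s) (hst : s ≤ t) (htT : t ≤ T)
    (hC : ∀ r ∈ Ioo s t, C ≤ f' r) :
    f s + C * (t - s) ≤ f t := by
  have hsub : Icc s t ⊆ Icc (0:ℝ) T := Icc_subset_Icc h0s htT
  have hg : ∀ r ∈ Icc s t, HasDerivWithinAt (fun r => f r - C * r) (f' r - C) (Icc s t) r := by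
    intro r hr
    have := ((hd r (hsub hr)).mono hsub).sub (((hasDerivWithinAt_id r (Icc s t)).const_mul C))
    simp only [id_eq, mul_one] at this
    exact this
  have mono := monotoneOn_of_hasDerivWithinAt_nonneg (convex_Icc s t)
      (fun r hr => (hg r hr).continuousWithinAt)
      (fun r hr => (hg r (interior_subset hr)).mono interior_subset)
      (fun r hr => by
        rw [interior_Icc] at hr
        have := hC r hr; linarith)
  have := mono (left_mem_Icc.2 hst) (right_mem_Icc.2 hst) hst
  simp only at this
  linarith

set_option maxHeartbeats 2000000 in
/-- **Exiting `A₄ = {u < 0}`.** For every nonempty compact `W ⊂ ℝ × [0,∞)` there is a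
time `T₀` such that every trajectory satisfying Condition I that stays in `W` and starts
with `U₁(0) < 0` hits `{u = 0}` at some time `t* ∈ (0, T₀]` with `U₂(t*) > 0`,
having `U₁(t) < 0` for all `t < t*`. -/
theorem exit_A4
    (p β Λ : ℝ) (hp : 2 < p) (hβ : 0 < β) (hΛ : 0 < Λ)
    (W : Set (ℝ × ℝ)) (hWc : IsCompact W) (hWne : W.Nonempty)
    (hWpos : ∀ z ∈ W, 0 ≤ z.2) :
    ∃ T₀ > (0 : ℝ), ∀ T ≥ T₀, ∀ U U' : ℝ → ℝ × ℝ,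
      CondI p β Λ T U U' → (∀ t ∈ Icc (0 : ℝ) T, U t ∈ W) → (U 0).1 < 0 →
      ∃ tstar ∈ Ioc (0 : ℝ) T₀,
        (U tstar).1 = 0 ∧ 0 < (U tstar).2 ∧ ∀ t ∈ Ico (0 : ℝ) tstar, (U t).1 < 0 := by
  -- a bound on W
  obtain ⟨r, hr⟩ := hWc.isBounded.subset_closedBall (0 : ℝ × ℝ)
  obtain ⟨M, hMpos, hMr⟩ : ∃ M, 0 < M ∧ r ≤ M := ⟨max r 1, lt_of_lt_of_le one_pos (le_max_right r 1), le_max_left r 1⟩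
  have hMW : ∀ z ∈ W, |z.1| ≤ M := by
    intro z hz
    have h1 := hr hz
    rw [Metric.mem_closedBall, dist_zero_right] at h1
    calc |z.1| = ‖z.1‖ := rfl
      _ ≤ ‖z‖ := norm_fst_le z
      _ ≤ r := h1
      _ ≤ M := hMr
  -- constants
  obtain ⟨a, ha, hadef⟩ : ∃ a : ℝ, 0 < a ∧ a = 2 * p * (p - 1) := ⟨_, by nlinarith, rfl⟩
  obtain ⟨c, hc, hcdef⟩ : ∃ c : ℝ, 0 < c ∧ c = 2 * (p - 1) + 2 * β * Λ := ⟨_, by nlinarith, rfl⟩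
  obtain ⟨v₀, hv₀, hcv⟩ : ∃ v₀ : ℝ, 0 < v₀ ∧ c * v₀ = a / 2 :=
    ⟨a / (2 * c), by positivity, by field_simp⟩
  obtain ⟨T₁, hT₁, hT₁v₀⟩ : ∃ T₁ : ℝ, 0 < T₁ ∧ a / 2 * T₁ = v₀ :=
    ⟨v₀ / (a / 2), by positivity, by field_simp⟩
  obtain ⟨δ, hδ, hδdef⟩ : ∃ δ : ℝ, 0 < δ ∧ δ = β * v₀ := ⟨_, by positivity, rfl⟩
  obtain ⟨T₀, hT₀pos, hT₁T₀, hδT⟩ :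
      ∃ T₀ : ℝ, 0 < T₀ ∧ T₁ ≤ T₀ ∧ δ * (T₀ - T₁) = M + δ := by
    refine ⟨T₁ + (M + δ) / δ, by positivity, ?_, by field_simp; ring⟩
    have : 0 ≤ (M + δ) / δ := by positivity
    linarith
  refine ⟨T₀, hT₀pos, ?_⟩
  intro T hT U U' hCond hWmem hU0
  obtain ⟨hderiv, hcontU', hF1', hF2'⟩ := hCond
  have hT0T : T₀ ≤ T := hT
  have hTpos : 0 < T := lt_of_lt_of_le hT₀pos hT0T
  have hUc : ContinuousOn U (Icc (0:ℝ) T) := fun t ht => (hderiv t ht).continuousWithinAt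
  have hvnn : ∀ t ∈ Icc (0:ℝ) T, 0 ≤ (U t).2 := fun t ht => hWpos _ (hWmem t ht)
  have hub : ∀ t ∈ Icc (0:ℝ) T, |(U t).1| ≤ M := fun t ht => hMW _ (hWmem t ht)
  -- Claim C : v > 0 on (0, T]
  have hvpos : ∀ t ∈ Ioc (0:ℝ) T, 0 < (U t).2 := by
    intro t ht
    by_contra hcon
    have htT : t ∈ Icc (0:ℝ) T := ⟨le_of_lt ht.1, ht.2⟩
    have hv0 : (U t).2 = 0 := le_antisymm (not_lt.1 hcon) (hvnn t htT)
    have hd2 : a ≤ (U' t).2 := by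
      have h1 := (hF2' t htT).1
      rw [F2L, hv0] at h1
      nlinarith [sq_nonneg (p * (U t).1)]
    have h2 : ContinuousWithinAt (fun r => (U' r).2) (Icc (0:ℝ) T) t :=
      (continuous_snd.continuousAt.comp_continuousWithinAt (hcontU' t htT))
    have hmem : {r : ℝ | a / 2 < (U' r).2} ∈ nhdsWithin t (Icc (0:ℝ) T) := by
      apply h2 (Ioi_mem_nhds ?_)
      linarith
    rw [Metric.mem_nhdsWithin_iff] at hmem
    obtain ⟨ε, hε, hball⟩ := hmem
    set s₀ : ℝ := max 0 (t - ε / 2) with hs₀_def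
    have hs₀t : s₀ < t := by
      apply max_lt ht.1; linarith
    have hs₀nn : (0:ℝ) ≤ s₀ := le_max_left _ _
    have hs₀half : t - ε / 2 ≤ s₀ := le_max_right _ _
    have hIoo : ∀ x ∈ Ioo s₀ t, a / 2 ≤ (U' x).2 := by
      intro x hxm
      have h1 : x ∈ Metric.ball t ε := by
        rw [Metric.mem_ball, Real.dist_eq, abs_lt]
        constructor
        · linarith [hxm.1]
        · linarith [hxm.2]
      have h3 : x ∈ Icc (0:ℝ) T :=
        ⟨le_trans hs₀nn (le_of_lt hxm.1), le_trans (le_of_lt hxm.2) ht.2⟩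
      exact le_of_lt (hball ⟨h1, h3⟩)
    have hg := grow (f := fun x => (U x).2) (f' := fun x => (U' x).2)
      (fun x hxm => mysnd (hderiv x hxm)) hs₀nn (le_of_lt hs₀t) ht.2 hIoo
    have hnn := hvnn s₀ ⟨hs₀nn, le_trans (le_of_lt hs₀t) ht.2⟩
    rw [hv0] at hg
    nlinarith
  -- main step: u cannot stay negative on [0, T₀]
  have hexit : ¬ (∀ s ∈ Icc (0:ℝ) T₀, (U s).1 < 0) := by
    intro hneg
    -- lower bound for the second derivative component while u < 0
    have hF2lb : ∀ s ∈ Icc (0:ℝ) T₀, a - c * (U s).2 ≤ (U' s).2 := by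
      intro s hs
      have hsT : s ∈ Icc (0:ℝ) T := ⟨hs.1, le_trans hs.2 hT0T⟩
      have h1 := (hF2' s hsT).1
      have hu := hneg s hs
      have hv := hvnn s hsT
      rw [F2L] at h1
      rw [hadef, hcdef]
      nlinarith [sq_nonneg (p * (U s).1),
        mul_nonneg (mul_nonneg (le_of_lt hβ) (neg_nonneg.2 (le_of_lt hu))) hv]
    -- v ≥ v₀ on [T₁, T₀]
    have hvlb : ∀ t ∈ Icc T₁ T₀, v₀ ≤ (U t).2 := by
      intro t ht
      have ht0 : 0 ≤ t := le_trans (le_of_lt hT₁) ht.1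
      have htT : t ≤ T := le_trans ht.2 hT0T
      by_cases hK : ∃ s ∈ Icc (0:ℝ) t, v₀ ≤ (U s).2
      · have hKc : IsClosed (Icc (0:ℝ) t ∩ (fun s => (U s).2) ⁻¹' Ici v₀) :=
          ContinuousOn.preimage_isClosed_of_isClosed
            ((continuous_snd.comp_continuousOn (hUc.mono (Icc_subset_Icc le_rfl htT))))
            isClosed_Icc isClosed_Ici
        obtain ⟨s₁, hs₁, hs₁v⟩ := hK
        have hKne : (Icc (0:ℝ) t ∩ (fun s => (U s).2) ⁻¹' Ici v₀).Nonempty := ⟨s₁, hs₁, hs₁v⟩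
        have hKbdd : BddAbove (Icc (0:ℝ) t ∩ (fun s => (U s).2) ⁻¹' Ici v₀) :=
          BddAbove.mono inter_subset_left bddAbove_Icc
        obtain ⟨hs₀I, hs₀v⟩ := hKc.csSup_mem hKne hKbdd
        set s₀ : ℝ := sSup (Icc (0:ℝ) t ∩ (fun s => (U s).2) ⁻¹' Ici v₀) with hs₀_def
        have hs₀v : v₀ ≤ (U s₀).2 := hs₀v
        have hIoo : ∀ x ∈ Ioo s₀ t, a / 2 ≤ (U' x).2 := by
          intro x hxm
          have hxI : x ∈ Icc (0:ℝ) t := ⟨le_trans hs₀I.1 (le_of_lt hxm.1), le_of_lt hxm.2⟩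
          have hxlt : (U x).2 < v₀ := by
            by_contra hcon
            have hxK : x ∈ Icc (0:ℝ) t ∩ (fun s => (U s).2) ⁻¹' Ici v₀ :=
              ⟨hxI, not_lt.1 hcon⟩
            exact absurd (le_csSup hKbdd hxK) (not_le.2 hxm.1)
          have hxT₀ : x ∈ Icc (0:ℝ) T₀ := ⟨hxI.1, le_trans hxI.2 ht.2⟩
          have := hF2lb x hxT₀
          nlinarith
        have hg := grow (f := fun x => (U x).2) (f' := fun x => (U' x).2)
          (fun x hxm => mysnd (hderiv x hxm)) hs₀I.1 hs₀I.2 htT hIoo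
        nlinarith [mul_nonneg (le_of_lt (by linarith : (0:ℝ) < a / 2)) (sub_nonneg.2 hs₀I.2)]
      · push_neg at hK
        have hIoo : ∀ x ∈ Ioo (0:ℝ) t, a / 2 ≤ (U' x).2 := by
          intro x hxm
          have hxI : x ∈ Icc (0:ℝ) t := ⟨le_of_lt hxm.1, le_of_lt hxm.2⟩
          have hxlt : (U x).2 < v₀ := hK x hxI
          have hxT₀ : x ∈ Icc (0:ℝ) T₀ := ⟨hxI.1, le_trans hxI.2 ht.2⟩
          have := hF2lb x hxT₀
          nlinarith
        have hg := grow (f := fun x => (U x).2) (f' := fun x => (U' x).2)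
          (fun x hxm => mysnd (hderiv x hxm)) le_rfl ht0 htT hIoo
        have hv00 : 0 ≤ (U 0).2 := hvnn 0 ⟨le_rfl, le_of_lt hTpos⟩
        have hmul : a / 2 * T₁ ≤ a / 2 * t := by
          apply mul_le_mul_of_nonneg_left ht.1
          linarith
        linarith
    -- u grows on [T₁, T₀]
    have hIoo : ∀ x ∈ Ioo T₁ T₀, δ ≤ (U' x).1 := by
      intro x hxm
      have hx0 : 0 ≤ x := le_trans (le_of_lt hT₁) (le_of_lt hxm.1)
      have hxT₀ : x ∈ Icc (0:ℝ) T₀ := ⟨hx0, le_of_lt hxm.2⟩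
      have hxT : x ∈ Icc (0:ℝ) T := ⟨hx0, le_trans (le_of_lt hxm.2) hT0T⟩
      have hu := hneg x hxT₀
      have hv := hvlb x ⟨le_of_lt hxm.1, le_of_lt hxm.2⟩
      rw [hF1' x hxT, F1, hδdef]
      nlinarith
    have hgrow := grow (f := fun x => (U x).1) (f' := fun x => (U' x).1)
      (fun x hxm => myfst (hderiv x hxm)) (le_of_lt hT₁) hT₁T₀ hT0T hIoo
    have huT₁ : -M ≤ (U T₁).1 := by
      have := hub T₁ ⟨le_of_lt hT₁, le_trans hT₁T₀ hT0T⟩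
      rw [abs_le] at this; exact this.1
    have huT₀ := hneg T₀ ⟨le_of_lt hT₀pos, le_rfl⟩
    linarith
  push_neg at hexit
  obtain ⟨s₂, hs₂I, hs₂⟩ := hexit
  have hs₂T : s₂ ≤ T := le_trans hs₂I.2 hT0T
  have hK₂c : IsClosed (Icc (0:ℝ) s₂ ∩ (fun t => (U t).1) ⁻¹' Ici 0) :=
    ContinuousOn.preimage_isClosed_of_isClosed
      (continuous_fst.comp_continuousOn (hUc.mono (Icc_subset_Icc le_rfl hs₂T)))
      isClosed_Icc isClosed_Ici
  have hK₂ne : (Icc (0:ℝ) s₂ ∩ (fun t => (U t).1) ⁻¹' Ici 0).Nonempty :=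
    ⟨s₂, ⟨hs₂I.1, le_rfl⟩, hs₂⟩
  have hK₂bdd : BddBelow (Icc (0:ℝ) s₂ ∩ (fun t => (U t).1) ⁻¹' Ici 0) :=
    BddBelow.mono inter_subset_left bddBelow_Icc
  obtain ⟨htI, hunn⟩ := hK₂c.csInf_mem hK₂ne hK₂bdd
  set tstar : ℝ := sInf (Icc (0:ℝ) s₂ ∩ (fun t => (U t).1) ⁻¹' Ici 0) with htstar_def
  have hunn : (0:ℝ) ≤ (U tstar).1 := hunn
  have htnn : 0 ≤ tstar := htI.1
  have htle : tstar ≤ T₀ := le_trans htI.2 hs₂I.2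
  have htT : tstar ≤ T := le_trans htle hT0T
  have hbefore : ∀ t ∈ Ico (0:ℝ) tstar, (U t).1 < 0 := by
    intro t ht
    by_contra hcon
    have htmem : t ∈ Icc (0:ℝ) s₂ ∩ (fun t => (U t).1) ⁻¹' Ici 0 :=
      ⟨⟨ht.1, le_trans (le_of_lt ht.2) htI.2⟩, not_lt.1 hcon⟩
    exact absurd (csInf_le hK₂bdd htmem) (not_le.2 ht.2)
  have htpos : 0 < tstar := by
    rcases lt_or_eq_of_le htnn with h | h
    · exact h
    · exfalso; rw [← h] at hunn; exact absurd hU0 (not_lt.2 hunn)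
  have hule : (U tstar).1 ≤ 0 := by
    have hcW : ContinuousWithinAt (fun t => (U t).1) (Ioo (0:ℝ) tstar) tstar := by
      have h1 := (continuous_fst.comp_continuousOn hUc) tstar ⟨htnn, htT⟩
      exact h1.mono (fun x hx => ⟨le_of_lt hx.1, le_trans (le_of_lt hx.2) htT⟩)
    haveI : (nhdsWithin tstar (Ioo (0:ℝ) tstar)).NeBot := right_nhdsWithin_Ioo_neBot htpos
    apply le_of_tendsto hcW
    filter_upwards [eventually_mem_nhdsWithin] with x hx
    exact le_of_lt (hbefore x ⟨le_of_lt hx.1, hx.2⟩)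
  exact ⟨tstar, ⟨htpos, htle⟩, le_antisymm hule hunn, hvpos tstar ⟨htpos, htT⟩, hbefore⟩
end

section
/- Fix real constants p > 2, β > 0, Λ > 0, a nonempty compact set W ⊂ ℝ × [0,∞), and η > 0. There exist δ ∈ (0, pη/β) and c > 0, ρ > 0 such that for every T > 0 and every continuously differentiable U : [0,T] → ℝ² satisfying Condition I with U(t) ∈ W for all t ∈ [0,T], U₁(0) ≥ η and 0 ≤ U₂(0) ≤ δ, one has U₁(t) − U₁(0) ≤ −c·t and U₂(t) − U₂(0) ≥ c·t for all t ∈ [0, min(ρ, T)]. -/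
open Set

lemma hasDerivWithinAt_fst' {U : ℝ → ℝ × ℝ} {d : ℝ × ℝ} {s : Set ℝ} {t : ℝ}
    (h : HasDerivWithinAt U d s t) :
    HasDerivWithinAt (fun t => (U t).1) d.1 s t := by
  simpa using h.hasFDerivWithinAt.fst.hasDerivWithinAt

lemma hasDerivWithinAt_snd' {U : ℝ → ℝ × ℝ} {d : ℝ × ℝ} {s : Set ℝ} {t : ℝ}
    (h : HasDerivWithinAt U d s t) :
    HasDerivWithinAt (fun t => (U t).2) d.2 s t := by
  simpa using h.hasFDerivWithinAt.snd.hasDerivWithinAt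

/-- **Climbing away from near-critical points.** For every nonempty compact
`W ⊂ ℝ × [0,∞)` and every `η > 0` there are `δ ∈ (0, pη/β)`, `c > 0` and `ρ > 0` such
that every trajectory satisfying Condition I that stays in `W` and starts with
`U₁(0) ≥ η` and `0 ≤ U₂(0) ≤ δ` satisfies `U₁(t) − U₁(0) ≤ −c t` and
`U₂(t) − U₂(0) ≥ c t` for all `t ∈ [0, min(ρ, T)]`. -/
theorem climb_from_critical
    (p β Λ : ℝ) (hp : 2 < p) (hβ : 0 < β) (hΛ : 0 < Λ)
    (W : Set (ℝ × ℝ)) (hWc : IsCompact W) (hWne : W.Nonempty)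
    (hWpos : ∀ z ∈ W, 0 ≤ z.2)
    (η : ℝ) (hη : 0 < η) :
    ∃ δ : ℝ, 0 < δ ∧ δ < p * η / β ∧ ∃ c > (0 : ℝ), ∃ ρ > (0 : ℝ),
      ∀ T > (0 : ℝ), ∀ U U' : ℝ → ℝ × ℝ,
        CondI p β Λ T U U' → (∀ t ∈ Icc (0 : ℝ) T, U t ∈ W) →
        η ≤ (U 0).1 → 0 ≤ (U 0).2 → (U 0).2 ≤ δ →
        ∀ t ∈ Icc (0 : ℝ) (min ρ T),
          (U t).1 - (U 0).1 ≤ -c * t ∧ c * t ≤ (U t).2 - (U 0).2 := by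
  have hppos : (0:ℝ) < p := by linarith
  have hp1 : (0:ℝ) < p - 1 := by linarith
  -- bounds on the compact set W
  obtain ⟨M0, hM0⟩ := hWc.exists_bound_of_continuousOn (continuous_fst.continuousOn :
    ContinuousOn (fun z : ℝ × ℝ => z.1) W)
  obtain ⟨K1, hK1⟩ := hWc.exists_bound_of_continuousOn (by unfold F1; fun_prop :
    ContinuousOn (F1 p β) W)
  obtain ⟨K2, hK2⟩ := hWc.exists_bound_of_continuousOn (by unfold F2L; fun_prop :
    ContinuousOn (F2L p β Λ) W)
  obtain ⟨K3, hK3⟩ := hWc.exists_bound_of_continuousOn (by unfold F2U; fun_prop :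
    ContinuousOn (F2U p β Λ) W)
  set M : ℝ := max M0 0 with hMdef
  have hM : ∀ z ∈ W, |z.1| ≤ M := fun z hz =>
    le_trans (by simpa using hM0 z hz) (le_max_left _ _)
  have hMnn : (0:ℝ) ≤ M := le_max_right _ _
  set K : ℝ := max (max K1 (max K2 K3)) 1 with hKdef
  have hKpos : (0:ℝ) < K := lt_of_lt_of_le one_pos (le_max_right _ _)
  have hK1' : ∀ z ∈ W, |F1 p β z| ≤ K := fun z hz =>
    le_trans (by simpa using hK1 z hz) (le_trans (le_max_left _ _) (le_max_left _ _))
  have hK2' : ∀ z ∈ W, |F2L p β Λ z| ≤ K := fun z hz =>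
    le_trans (by simpa using hK2 z hz)
      (le_trans (le_trans (le_max_left _ _) (le_max_right _ _)) (le_max_left _ _))
  have hK3' : ∀ z ∈ W, |F2U p β Λ z| ≤ K := fun z hz =>
    le_trans (by simpa using hK3 z hz)
      (le_trans (le_trans (le_max_right _ _) (le_max_right _ _)) (le_max_left _ _))
  have hApos : (0:ℝ) < 2*(p-1) + 2*p*β*M + 2*β*Λ := by
    have h1 : (0:ℝ) ≤ 2*p*β*M := by positivity
    have h2 : (0:ℝ) < 2*β*Λ := by positivity
    linarith
  set δ : ℝ := min (p*η/(8*β)) (p*(p-1)/(4*(2*(p-1) + 2*p*β*M + 2*β*Λ))) with hδdef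
  have hδpos : 0 < δ := lt_min (by positivity) (by positivity)
  have hδ1 : δ ≤ p*η/(8*β) := min_le_left _ _
  have hδ2 : δ ≤ p*(p-1)/(4*(2*(p-1) + 2*p*β*M + 2*β*Λ)) := min_le_right _ _
  set c : ℝ := min (p*η/4) (p*(p-1)) with hcdef
  have hcpos : 0 < c := lt_min (by positivity) (by positivity)
  have hc1 : c ≤ p*η/4 := min_le_left _ _
  have hc2 : c ≤ p*(p-1) := min_le_right _ _
  set ρ : ℝ := min (η/(2*K)) (δ/K) with hρdef
  have hρpos : 0 < ρ := lt_min (by positivity) (by positivity)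
  -- key product facts
  have hβδ : β*δ ≤ p*η/8 := by
    have h := mul_le_mul_of_nonneg_left hδ1 hβ.le
    have e : β * (p*η/(8*β)) = p*η/8 := by field_simp
    linarith
  have hAδ : (2*(p-1) + 2*p*β*M + 2*β*Λ)*δ ≤ p*(p-1)/4 := by
    have h := mul_le_mul_of_nonneg_left hδ2 hApos.le
    have hA0 : (2*(p-1) + 2*p*β*M + 2*β*Λ) ≠ 0 := hApos.ne'
    have e : (2*(p-1) + 2*p*β*M + 2*β*Λ) *
        (p*(p-1)/(4*(2*(p-1) + 2*p*β*M + 2*β*Λ))) = p*(p-1)/4 := by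
      field_simp
    linarith
  refine ⟨δ, hδpos, ?_, c, hcpos, ρ, hρpos, ?_⟩
  · -- δ < pη/β
    have h8 : p*η/(8*β) < p*η/β := by
      rw [div_lt_div_iff₀ (by positivity) hβ]
      nlinarith [mul_pos (mul_pos hppos hη) hβ]
    exact lt_of_le_of_lt hδ1 h8
  intro T hT U U' hCI hUW hU1 hU2a hU2b
  obtain ⟨hd, hc', h1, h2⟩ := hCI
  set m : ℝ := min ρ T with hmdef
  have hm0 : (0:ℝ) ≤ m := le_min hρpos.le hT.le
  have hsub : Icc (0:ℝ) m ⊆ Icc 0 T := Icc_subset_Icc le_rfl (min_le_right _ _)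
  -- bound on ‖U'‖
  have hUb : ∀ t ∈ Icc (0:ℝ) T, ‖U' t‖ ≤ K := by
    intro t ht
    have hw := hUW t ht
    have e1 : |(U' t).1| ≤ K := by rw [h1 t ht]; exact hK1' _ hw
    have e2 : |(U' t).2| ≤ K := by
      obtain ⟨hl, hu⟩ := h2 t ht
      have a2 := abs_le.1 (hK2' _ hw)
      have a3 := abs_le.1 (hK3' _ hw)
      rw [abs_le]; constructor <;> linarith
    rw [Prod.norm_def]
    simp only [Real.norm_eq_abs]
    exact max_le e1 e2
  -- Lipschitz estimate
  have hLip : ∀ t ∈ Icc (0:ℝ) T, ‖U t - U 0‖ ≤ K * t := by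
    intro t ht
    have h0 : (0:ℝ) ∈ Icc (0:ℝ) T := ⟨le_rfl, hT.le⟩
    have h := Convex.norm_image_sub_le_of_norm_hasDerivWithin_le hd hUb (convex_Icc _ _) h0 ht
    simpa [Real.norm_eq_abs, abs_of_nonneg ht.1] using h
  -- position bounds on [0, m]
  have hpos : ∀ t ∈ Icc (0:ℝ) m, η/2 ≤ (U t).1 ∧ (U t).2 ≤ 2*δ ∧ 0 ≤ (U t).2 := by
    intro t ht
    have htT := hsub ht
    have hA := (norm_fst_le (U t - U 0)).trans (hLip t htT)
    have hB := (norm_snd_le (U t - U 0)).trans (hLip t htT)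
    simp only [Prod.fst_sub, Prod.snd_sub, Real.norm_eq_abs] at hA hB
    have htρ1 : t ≤ η/(2*K) :=
      le_trans ht.2 (le_trans (min_le_left _ _) (min_le_left _ _))
    have htρ2 : t ≤ δ/K :=
      le_trans ht.2 (le_trans (min_le_left _ _) (min_le_right _ _))
    have hKt1 : K * t ≤ η/2 := by
      have h := mul_le_mul_of_nonneg_left htρ1 hKpos.le
      have e : K * (η/(2*K)) = η/2 := by field_simp
      linarith
    have hKt2 : K * t ≤ δ := by
      have h := mul_le_mul_of_nonneg_left htρ2 hKpos.le
      have e : K * (δ/K) = δ := by field_simp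
      linarith
    have a1 := abs_le.1 hA
    have a2 := abs_le.1 hB
    exact ⟨by linarith, by linarith, hWpos _ (hUW t htT)⟩
  -- derivative sign bounds on [0, m]
  have hder : ∀ t ∈ Icc (0:ℝ) m, (U' t).1 ≤ -c ∧ c ≤ (U' t).2 := by
    intro t ht
    have htT := hsub ht
    obtain ⟨ha, hb, hb0⟩ := hpos t ht
    have hMu : |(U t).1| ≤ M := hM _ (hUW t htT)
    constructor
    · rw [h1 t htT]
      simp only [F1]
      have hβv : β*(U t).2 ≤ β*(2*δ) := mul_le_mul_of_nonneg_left hb hβ.le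
      have hpu : p*(η/2) ≤ p*(U t).1 := mul_le_mul_of_nonneg_left ha hppos.le
      linarith
    · have hl := (h2 t htT).1
      have hgoal : c ≤ F2L p β Λ (U t) := by
        simp only [F2L]
        have f1 : (U t).1*(U t).2 ≤ M*(U t).2 :=
          mul_le_mul_of_nonneg_right ((le_abs_self _).trans hMu) hb0
        have f1' : (2*p*β)*((U t).1*(U t).2) ≤ (2*p*β)*(M*(U t).2) :=
          mul_le_mul_of_nonneg_left f1 (by positivity)
        have hAv : (2*(p-1) + 2*p*β*M + 2*β*Λ)*(U t).2 ≤
            (2*(p-1) + 2*p*β*M + 2*β*Λ)*(2*δ) :=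
          mul_le_mul_of_nonneg_left hb hApos.le
        have f4 : (0:ℝ) ≤ p^2*((U t).1)^2 := by positivity
        linarith [hAδ, hc2, f1', hAv, f4]
      linarith
  -- conclude by monotonicity
  have hUcont : ContinuousOn U (Icc (0:ℝ) T) := fun x hx => (hd x hx).continuousWithinAt
  have hintsub : interior (Icc (0:ℝ) m) ⊆ Icc (0:ℝ) T := interior_subset.trans hsub
  intro t ht
  have h0m : (0:ℝ) ∈ Icc (0:ℝ) m := ⟨le_rfl, hm0⟩
  constructor
  · have hanti : AntitoneOn (fun s => (U s).1 + c * s) (Icc (0:ℝ) m) := by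
      refine antitoneOn_of_hasDerivWithinAt_nonpos (f' := fun s => (U' s).1 + c)
        (convex_Icc _ _) ?_ ?_ ?_
      · exact ((hUcont.mono hsub).fst).add (continuous_const.mul continuous_id).continuousOn
      · intro x hx
        have h' := (hasDerivWithinAt_fst' (hd x (hintsub hx))).mono hintsub
        have hlin : HasDerivWithinAt (fun s : ℝ => c * s) c (interior (Icc (0:ℝ) m)) x := by
          simpa using ((hasDerivAt_id x).const_mul c).hasDerivWithinAt
        exact h'.add hlin
      · intro x hx
        have := (hder x (interior_subset hx)).1
        show (U' x).1 + c ≤ 0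
        linarith
    have h := hanti h0m ht ht.1
    simp only [mul_zero] at h
    linarith
  · have hmono : MonotoneOn (fun s => (U s).2 - c * s) (Icc (0:ℝ) m) := by
      refine monotoneOn_of_hasDerivWithinAt_nonneg (f' := fun s => (U' s).2 - c)
        (convex_Icc _ _) ?_ ?_ ?_
      · exact ((hUcont.mono hsub).snd).sub (continuous_const.mul continuous_id).continuousOn
      · intro x hx
        have h' := (hasDerivWithinAt_snd' (hd x (hintsub hx))).mono hintsub
        have hlin : HasDerivWithinAt (fun s : ℝ => c * s) c (interior (Icc (0:ℝ) m)) x := by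
          simpa using ((hasDerivAt_id x).const_mul c).hasDerivWithinAt
        exact h'.sub hlin
      · intro x hx
        have := (hder x (interior_subset hx)).2
        show 0 ≤ (U' x).2 - c
        linarith
    have h := hmono h0m ht ht.1
    simp only [mul_zero] at h
    linarith
end

section
/- Let k ≥ 1 be an integer. There exists a constant C = C(k) > 0 such that for every integer N ≥ 1 the following holds. Let (g_{i₁,…,i_k}), indexed by (i₁,…,i_k) ∈ {1,…,N}^k, be i.i.d. standard Gaussian random variables, and define the random k-linear form A on ℝ^N by A(X₁,…,X_k) = N^{−(k−1)/2} Σ_{i₁,…,i_k} g_{i₁,…,i_k} X₁(i₁)⋯X_k(i_k). Then E[ sup { A(X₁,…,X_k) : X₁,…,X_k ∈ ℝ^N, |X₁| = ⋯ = |X_k| = 1 } ] ≤ C · N^{1−k/2}. -/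
open MeasureTheory ProbabilityTheory

section Aux

open Metric Set Finset Real
open scoped ENNReal NNReal

namespace GaussTensorAux

lemma pdf_shift (t x : ℝ) : Real.exp (t*x) * gaussianPDFReal 0 1 x
    = Real.exp (t^2/2) * gaussianPDFReal t 1 x := by
  simp only [gaussianPDFReal]
  rw [mul_left_comm, mul_left_comm (rexp (t^2/2)), ← Real.exp_add, ← Real.exp_add]
  congr 1
  push_cast
  ring

lemma gauss_int (t : ℝ) : ∫ x, Real.exp (t*x) ∂(gaussianReal 0 1) = Real.exp (t^2/2) := by
  rw [gaussianReal_of_var_ne_zero 0 one_ne_zero]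
  have h : (gaussianPDF 0 1) = fun x => ((Real.toNNReal (gaussianPDFReal 0 1 x) : ℝ≥0) : ℝ≥0∞) := by
    ext x; rfl
  have key : ∀ x : ℝ, (Real.toNNReal (gaussianPDFReal 0 1 x) : ℝ≥0) • Real.exp (t*x)
      = Real.exp (t^2/2) * gaussianPDFReal t 1 x := by
    intro x
    rw [NNReal.smul_def, smul_eq_mul, Real.coe_toNNReal _ (gaussianPDFReal_nonneg 0 1 x),
      mul_comm, pdf_shift]
  rw [h, integral_withDensity_eq_integral_smul ((measurable_gaussianPDFReal 0 1).real_toNNReal) _]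
  simp_rw [key]
  rw [integral_const_mul, integral_gaussianPDFReal_eq_one t one_ne_zero, mul_one]

lemma gauss_integrable (t : ℝ) : Integrable (fun x => Real.exp (t*x)) (gaussianReal 0 1) := by
  rw [gaussianReal_of_var_ne_zero 0 one_ne_zero]
  have h : (gaussianPDF 0 1) = fun x => ((Real.toNNReal (gaussianPDFReal 0 1 x) : ℝ≥0) : ℝ≥0∞) := by
    ext x; rfl
  have key : ∀ x : ℝ, (Real.toNNReal (gaussianPDFReal 0 1 x) : ℝ≥0) • Real.exp (t*x)
      = Real.exp (t^2/2) * gaussianPDFReal t 1 x := by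
    intro x
    rw [NNReal.smul_def, smul_eq_mul, Real.coe_toNNReal _ (gaussianPDFReal_nonneg 0 1 x),
      mul_comm, pdf_shift]
  rw [h, integrable_withDensity_iff_integrable_smul ((measurable_gaussianPDFReal 0 1).real_toNNReal)]
  simp_rw [key]
  exact (integrable_gaussianPDFReal t 1).const_mul _

lemma sphere_net (N : ℕ) (hN : 1 ≤ N) {ε : ℝ} (hε : 0 < ε) :
    ∃ T : Finset (EuclideanSpace ℝ (Fin N)), T.Nonempty ∧ (∀ y ∈ T, ‖y‖ = 1) ∧
      (∀ x : EuclideanSpace ℝ (Fin N), ‖x‖ = 1 → ∃ y ∈ T, dist x y ≤ ε) ∧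
      (T.card : ℝ) ≤ (1 + 2/ε) ^ N := by
  classical
  set E := EuclideanSpace ℝ (Fin N)
  haveI : Nontrivial E := by
    refine ⟨EuclideanSpace.single ⟨0, hN⟩ (1:ℝ), 0, ?_⟩
    intro h
    have := congrArg norm h
    rw [EuclideanSpace.norm_single, norm_zero, norm_one] at this
    exact one_ne_zero this
  set S : Set E := {x | ‖x‖ = 1}
  obtain ⟨P, hPmem, hPmax⟩ := zorn_subset
      {s : Set E | s ⊆ S ∧ s.Pairwise fun x y => ε ≤ dist x y} (fun c hc hchain => by
    refine ⟨⋃₀ c, ⟨?_, ?_⟩, fun s hs => subset_sUnion_of_mem hs⟩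
    · exact sUnion_subset fun s hs => (hc hs).1
    · intro x hx y hy hxy
      obtain ⟨s, hs, hxs⟩ := hx
      obtain ⟨u, hu, hyu⟩ := hy
      rcases hchain.total hs hu with h | h
      · exact (hc hu).2 (h hxs) hyu hxy
      · exact (hc hs).2 hxs (h hyu) hxy)
  obtain ⟨hPS, hPsep⟩ := hPmem
  have hnet : ∀ x ∈ S, ∃ y ∈ P, dist x y ≤ ε := by
    intro x hx
    by_contra hcon
    push_neg at hcon
    have hxP : x ∉ P := by
      intro h
      have := hcon x h
      rw [dist_self] at this
      linarith
    have : insert x P ∈ {s : Set E | s ⊆ S ∧ s.Pairwise fun x y => ε ≤ dist x y} := by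
      constructor
      · exact insert_subset hx hPS
      · refine hPsep.insert fun y hy hxy => ?_
        exact ⟨(hcon y hy).le, by rw [dist_comm]; exact (hcon y hy).le⟩
    exact hxP (hPmax this (subset_insert x P) (mem_insert x P))
  have hcard : ∀ F : Finset E, ↑F ⊆ P → (F.card : ℝ) ≤ (1 + 2/ε) ^ N := by
    intro F hF
    have hdisj : (F : Set E).Pairwise (Function.onFun Disjoint fun y => ball y (ε/2)) := by
      intro x hx y hy hxy
      apply ball_disjoint_ball
      have := hPsep (hF hx) (hF hy) hxy
      linarith
    have hsub : (⋃ y ∈ F, ball y (ε/2)) ⊆ ball 0 (1 + ε/2) := by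
      refine iUnion₂_subset fun y hy => ?_
      intro z hz
      rw [mem_ball] at hz ⊢
      have : dist y (0:E) = 1 := by
        rw [dist_zero_right]; exact hPS (hF hy)
      calc dist z 0 ≤ dist z y + dist y 0 := dist_triangle _ _ _
        _ < ε/2 + 1 := by rw [this]; linarith
        _ = 1 + ε/2 := by ring
    have hvol := measure_biUnion_finset hdisj (fun y _ => measurableSet_ball) (μ := volume)
    have hmono := measure_mono (μ := volume) hsub
    rw [hvol] at hmono
    have hball : ∀ y : E, volume (ball y (ε/2)) = ENNReal.ofReal ((ε/2)^N) * volume (ball (0:E) 1) := by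
      intro y
      rw [Measure.addHaar_ball volume y (by linarith : (0:ℝ) ≤ ε/2), finrank_euclideanSpace,
        Fintype.card_fin]
    have hball2 : volume (ball (0:E) (1 + ε/2))
        = ENNReal.ofReal ((1+ε/2)^N) * volume (ball (0:E) 1) := by
      rw [Measure.addHaar_ball volume _ (by linarith : (0:ℝ) ≤ 1+ε/2), finrank_euclideanSpace,
        Fintype.card_fin]
    simp_rw [hball, hball2, Finset.sum_const, nsmul_eq_mul] at hmono
    have hv0 : volume (ball (0:E) 1) ≠ 0 := (measure_ball_pos _ _ one_pos).ne'
    have hvt : volume (ball (0:E) 1) ≠ ⊤ := measure_ball_lt_top.ne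
    rw [← mul_assoc] at hmono
    have := ENNReal.mul_le_mul_iff_left hv0 hvt |>.mp hmono
    have hε2 : (0:ℝ) < (ε/2)^N := pow_pos (by linarith) N
    rw [← ENNReal.ofReal_natCast, ← ENNReal.ofReal_mul (by positivity)] at this
    have hreal : (F.card : ℝ) * (ε/2)^N ≤ (1+ε/2)^N := by
      exact ENNReal.ofReal_le_ofReal_iff (by positivity) |>.mp this
    rw [← le_div_iff₀ hε2] at hreal
    have hq : (1+ε/2)/(ε/2) = 1 + 2/ε := by field_simp; ring
    rw [← div_pow, hq] at hreal
    exact hreal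
  have hPfin : P.Finite := by
    by_contra hinf
    rw [← Set.not_infinite, not_not] at hinf
    obtain ⟨F, hFP, hFcard⟩ := hinf.exists_subset_card_eq (Nat.ceil ((1+2/ε)^N) + 1)
    have h1 := hcard F hFP
    rw [hFcard] at h1
    have h2 : ((1+2/ε)^N : ℝ) < ((Nat.ceil ((1+2/ε)^N) + 1 : ℕ) : ℝ) := by
      push_cast
      have := Nat.le_ceil ((1+2/ε)^N : ℝ)
      linarith
    linarith
  refine ⟨hPfin.toFinset, ?_, ?_, ?_, ?_⟩
  · obtain ⟨x0, hx0⟩ : S.Nonempty := ⟨EuclideanSpace.single ⟨0, hN⟩ (1:ℝ), by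
      show ‖EuclideanSpace.single (⟨0,hN⟩ : Fin N) (1:ℝ)‖ = 1
      simp⟩
    obtain ⟨y, hy, -⟩ := hnet x0 hx0
    exact ⟨y, hPfin.mem_toFinset.mpr hy⟩
  · intro y hy
    exact hPS (hPfin.mem_toFinset.mp hy)
  · intro x hx
    obtain ⟨y, hy, hd⟩ := hnet x hx
    exact ⟨y, hPfin.mem_toFinset.mpr hy, hd⟩
  · have : ↑hPfin.toFinset ⊆ P := by
      intro y hy
      exact hPfin.mem_toFinset.mp hy
    exact hcard _ this

noncomputable def tCLM (k N : ℕ) (x : (Fin k → Fin N) → ℝ) :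
    ContinuousMultilinearMap ℝ (fun _ : Fin k => EuclideanSpace ℝ (Fin N)) ℝ :=
  ∑ i : Fin k → Fin N, x i •
    (ContinuousMultilinearMap.mkPiAlgebra ℝ (Fin k) ℝ).compContinuousLinearMap
      (fun j => EuclideanSpace.proj (i j))

lemma tCLM_apply (k N : ℕ) (x : (Fin k → Fin N) → ℝ) (X : Fin k → EuclideanSpace ℝ (Fin N)) :
    tCLM k N x X = ∑ i : Fin k → Fin N, x i * ∏ j, X j (i j) := by
  simp [tCLM, ContinuousMultilinearMap.sum_apply, ContinuousMultilinearMap.smul_apply,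
    ContinuousMultilinearMap.compContinuousLinearMap_apply,
    ContinuousMultilinearMap.mkPiAlgebra_apply, smul_eq_mul]

lemma opNorm_le_net (k N : ℕ) (hk : 1 ≤ k) (x : (Fin k → Fin N) → ℝ)
    (T : Finset (EuclideanSpace ℝ (Fin N))) (hTne : T.Nonempty)
    (hT1 : ∀ y ∈ T, ‖y‖ = 1)
    (hTnet : ∀ z : EuclideanSpace ℝ (Fin N), ‖z‖ = 1 → ∃ y ∈ T, dist z y ≤ 1/(2*k)) :
    ‖tCLM k N x‖ ≤ 2 * (Fintype.piFinset fun _ : Fin k => T).sup'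
      (Fintype.piFinset_nonempty.mpr fun _ => hTne) (fun Y => |tCLM k N x Y|) := by
  classical
  set F := tCLM k N x
  set 𝒯 := Fintype.piFinset fun _ : Fin k => T with h𝒯
  set Z := 𝒯.sup' (Fintype.piFinset_nonempty.mpr fun _ => hTne) (fun Y => |F Y|) with hZ
  have hZ0 : 0 ≤ Z := by
    obtain ⟨Y, hY⟩ := (Fintype.piFinset_nonempty.mpr fun _ => hTne : 𝒯.Nonempty)
    exact le_trans (abs_nonneg (F Y)) (Finset.le_sup' (fun Y => |F Y|) hY)
  have hFZ : ∀ Y ∈ 𝒯, |F Y| ≤ Z := fun Y hY => Finset.le_sup' (fun Y => |F Y|) hY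
  have hkpos : (0:ℝ) < k := by exact_mod_cast hk
  suffices h : ‖F‖ ≤ Z + ‖F‖/2 by linarith
  apply ContinuousMultilinearMap.opNorm_le_bound
  · have := ContinuousMultilinearMap.opNorm_nonneg (f := F)
    positivity
  intro m
  by_cases h0 : ∀ j, m j ≠ 0
  · set u : Fin k → EuclideanSpace ℝ (Fin N) := fun j => ‖m j‖⁻¹ • m j with hu
    have hu1 : ∀ j, ‖u j‖ = 1 := by
      intro j
      rw [hu, norm_smul, norm_inv, norm_norm, inv_mul_cancel₀ (norm_ne_zero_iff.mpr (h0 j))]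
    have hmu : m = fun j => ‖m j‖ • u j := by
      funext j
      rw [hu, smul_smul, mul_inv_cancel₀ (norm_ne_zero_iff.mpr (h0 j)), one_smul]
    choose Y hYT hYd using fun j => hTnet (u j) (hu1 j)
    have hY𝒯 : Y ∈ 𝒯 := by rw [h𝒯, Fintype.mem_piFinset]; exact hYT
    have hstep : ‖F u - F Y‖ ≤ ‖F‖ * (k * (1/(2*k))) := by
      refine le_trans (F.norm_image_sub_le' u Y)
        (mul_le_mul_of_nonneg_left ?_ (ContinuousMultilinearMap.opNorm_nonneg F))
      calc (∑ i, ∏ j, (if j = i then ‖u i - Y i‖ else max ‖u j‖ ‖Y j‖))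
          ≤ ∑ _i : Fin k, (1/(2*(k:ℝ))) := by
            apply Finset.sum_le_sum
            intro i _
            calc ∏ j, (if j = i then ‖u i - Y i‖ else max ‖u j‖ ‖Y j‖)
                ≤ ∏ j, (if j = i then (1/(2*(k:ℝ))) else 1) := by
                  apply Finset.prod_le_prod
                  · intro j _; positivity
                  · intro j _
                    by_cases hji : j = i
                    · rw [if_pos hji, if_pos hji, ← dist_eq_norm]
                      exact hYd i
                    · rw [if_neg hji, if_neg hji]
                      exact max_le (le_of_eq (hu1 j)) (le_of_eq (hT1 _ (hYT j)))
              _ = 1/(2*(k:ℝ)) := by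
                  rw [Finset.prod_ite_eq' Finset.univ i (fun _ => (1/(2*(k:ℝ))))]
                  simp
        _ = k * (1/(2*(k:ℝ))) := by
            rw [Finset.sum_const, Finset.card_univ, Fintype.card_fin, nsmul_eq_mul]
    have huF : ‖F u‖ ≤ Z + ‖F‖/2 := by
      have h1 : ‖F u‖ ≤ ‖F u - F Y‖ + ‖F Y‖ := by
        calc ‖F u‖ = ‖(F u - F Y) + F Y‖ := by ring_nf
          _ ≤ ‖F u - F Y‖ + ‖F Y‖ := norm_add_le _ _
      have h2 : ‖F Y‖ ≤ Z := by rw [Real.norm_eq_abs]; exact hFZ Y hY𝒯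
      have h3 : ‖F‖ * ((k:ℝ) * (1/(2*k))) = ‖F‖/2 := by field_simp
      linarith [hstep]
    calc ‖F m‖ = (∏ j, ‖m j‖) * ‖F u‖ := by
          conv_lhs => rw [hmu]
          rw [F.map_smul_univ (fun j => ‖m j‖) u]
          rw [smul_eq_mul, Real.norm_eq_abs, abs_mul,
            abs_of_nonneg (by positivity : (0:ℝ) ≤ ∏ j, ‖m j‖), Real.norm_eq_abs]
      _ ≤ (∏ j, ‖m j‖) * (Z + ‖F‖/2) := by
          apply mul_le_mul_of_nonneg_left huF (by positivity)
      _ = (Z + ‖F‖/2) * ∏ j, ‖m j‖ := by ring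
  · push_neg at h0
    obtain ⟨j, hj⟩ := h0
    rw [F.map_coord_zero j hj, norm_zero]
    have : ∏ i, ‖m i‖ = 0 := Finset.prod_eq_zero (Finset.mem_univ j) (by rw [hj, norm_zero])
    rw [this, mul_zero]

lemma sum_prod_sq (k N : ℕ) (Y : Fin k → EuclideanSpace ℝ (Fin N))
    (hY : ∀ j, ‖Y j‖ = 1) :
    ∑ i : Fin k → Fin N, (∏ j, Y j (i j))^2 = 1 := by
  classical
  have h1 : ∀ j, ∑ m : Fin N, (Y j m)^2 = 1 := by
    intro j
    have h := hY j
    rw [EuclideanSpace.norm_eq] at h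
    have h2 : ∑ m : Fin N, (Y j m)^2 = ∑ m : Fin N, ‖Y j m‖^2 := by
      refine Finset.sum_congr rfl fun m _ => ?_
      rw [Real.norm_eq_abs, sq_abs]
    have h3 := congrArg (· ^ 2) h
    simp only [Real.sq_sqrt (Finset.sum_nonneg fun m _ => sq_nonneg ‖Y j m‖), one_pow] at h3
    rw [h2, h3]
  have key := Finset.prod_univ_sum (fun _ : Fin k => (Finset.univ : Finset (Fin N)))
    (fun j m => (Y j m)^2)
  rw [Fintype.piFinset_univ] at key
  simp_rw [← Finset.prod_pow]
  rw [← key]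
  exact Finset.prod_eq_one fun j _ => h1 j

end GaussTensorAux

end Aux

set_option maxHeartbeats 1000000 in
open GaussTensorAux Finset Real in
/-- **Expected injective norm of an i.i.d. Gaussian `k`-tensor.** For every `k ≥ 1` there
is `C = C(k) > 0` such that for every `N ≥ 1` and every family `(g_{i₁,…,i_k})` of i.i.d.
standard Gaussians indexed by `{1,…,N}^k`, the expected supremum of
`N^{-(k-1)/2} Σ g_{i₁,…,i_k} X₁(i₁)⋯X_k(i_k)` over `k`-tuples of Euclidean unit vectors
is at most `C·N^{1-k/2}`. -/
theorem gaussian_tensor_injective_norm (k : ℕ) (hk : 1 ≤ k) :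
    ∃ C > (0 : ℝ), ∀ N : ℕ, 1 ≤ N →
      ∀ (Ω : Type) (_ : MeasurableSpace Ω) (μ : Measure Ω), IsProbabilityMeasure μ →
      ∀ g : (Fin k → Fin N) → Ω → ℝ,
        (∀ i, Measurable (g i)) →
        (∀ i, Measure.map (g i) μ = gaussianReal 0 1) →
        iIndepFun g μ →
        (∫ ω, sSup {a : ℝ | ∃ X : Fin k → EuclideanSpace ℝ (Fin N),
            (∀ j, ‖X j‖ = 1) ∧
            a = (N : ℝ) ^ (-(((k : ℝ) - 1) / 2)) *
              ∑ i : Fin k → Fin N, g i ω * ∏ j, X j (i j)} ∂μ)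
          ≤ C * (N : ℝ) ^ ((1 : ℝ) - k / 2) := by
  classical
  have hkpos : (0:ℝ) < k := by exact_mod_cast hk
  set D : ℝ := Real.log 2 + k * Real.log (1 + 4*k) with hD
  have hDpos : 0 < D := by
    have h1 : 0 < Real.log 2 := Real.log_pos (by norm_num)
    have h2 : 0 ≤ Real.log (1 + 4*k) := Real.log_nonneg (by nlinarith)
    nlinarith
  refine ⟨2 * Real.sqrt (2 * D), by positivity, ?_⟩
  intro N hN Ω mΩ μ hμ g hgmeas hgmap hgindep
  have hNpos : (0:ℝ) < N := by exact_mod_cast hN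
  set c : ℝ := (N : ℝ) ^ (-(((k : ℝ) - 1) / 2)) with hc
  have hcpos : 0 < c := Real.rpow_pos_of_pos hNpos _
  -- the net
  have hεpos : (0:ℝ) < 1/(2*k) := by positivity
  obtain ⟨T, hTne, hT1, hTnet, hTcard⟩ := sphere_net N hN hεpos
  set 𝒯 := Fintype.piFinset fun _ : Fin k => T with h𝒯
  have h𝒯ne : 𝒯.Nonempty := Fintype.piFinset_nonempty.mpr fun _ => hTne
  -- basic gaussian facts transported to Ω
  have hint : ∀ (s : ℝ) i, Integrable (fun ω => rexp (s * g i ω)) μ := by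
    intro s i
    have h' := gauss_integrable s
    rw [← hgmap i] at h'
    exact (integrable_map_measure (measurable_const_mul s).exp.aestronglyMeasurable
      (hgmeas i).aemeasurable).mp h'
  have hmgf : ∀ (s : ℝ) i, ∫ ω, rexp (s * g i ω) ∂μ = rexp (s^2/2) := by
    intro s i
    have h1 : ∫ ω, rexp (s * g i ω) ∂μ = ∫ x, rexp (s * x) ∂(Measure.map (g i) μ) :=
      (integral_map (hgmeas i).aemeasurable
        (measurable_const_mul s).exp.aestronglyMeasurable).symm
    rw [h1, hgmap i, gauss_int]
  have hgi : ∀ i, Integrable (g i) μ := by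
    intro i
    refine Integrable.mono' ((hint 1 i).add (hint (-1) i))
      (hgmeas i).aestronglyMeasurable ?_
    filter_upwards with ω
    rw [Real.norm_eq_abs]
    have e1 := Real.add_one_le_exp (g i ω)
    have e2 := Real.add_one_le_exp (-(g i ω))
    have p1 := (Real.exp_pos (g i ω)).le
    have p2 := (Real.exp_pos (-(g i ω))).le
    have hb : |g i ω| ≤ rexp (g i ω) + rexp (-(g i ω)) := by
      rcases abs_cases (g i ω) with ⟨h, _⟩ | ⟨h, _⟩ <;> rw [h] <;> linarith
    simp only [one_mul, neg_one_mul]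
    exact hb
  -- the dominating max process
  set W : (Fin k → EuclideanSpace ℝ (Fin N)) → Ω → ℝ :=
    fun Y ω => ∑ i : Fin k → Fin N, g i ω * ∏ j, Y j (i j) with hW
  set Z : Ω → ℝ := fun ω => 𝒯.sup' h𝒯ne fun Y => |W Y ω| with hZdef
  have hWmeas : ∀ Y, Measurable (W Y) :=
    fun Y => Finset.measurable_sum _ fun i _ => (hgmeas i).mul_const _
  have hWint : ∀ Y, Integrable (W Y) μ :=
    fun Y => integrable_finset_sum _ fun i _ => (hgi i).mul_const _
  have hZmeas : Measurable Z := by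
    have h := Finset.measurable_sup' h𝒯ne (f := fun Y => fun ω => |W Y ω|)
      (fun Y _ => (hWmeas Y).abs)
    convert h using 1
    funext ω
    rw [hZdef]
    exact (Finset.sup'_apply h𝒯ne (fun Y => fun ω => |W Y ω|) ω).symm
  have hZ0 : ∀ ω, 0 ≤ Z ω := by
    intro ω
    obtain ⟨Y, hY⟩ := h𝒯ne
    exact le_trans (abs_nonneg (W Y ω)) (Finset.le_sup' (fun Y => |W Y ω|) hY)
  have hZint : Integrable Z μ := by
    refine Integrable.mono' (integrable_finset_sum 𝒯 fun Y _ => (hWint Y).abs)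
      hZmeas.aestronglyMeasurable ?_
    filter_upwards with ω
    rw [Real.norm_eq_abs, abs_of_nonneg (hZ0 ω)]
    refine Finset.sup'_le h𝒯ne _ fun Y hY => ?_
    exact Finset.single_le_sum (fun Y _ => abs_nonneg (W Y ω)) hY
  -- pointwise bound of the sSup by the max process
  have hpoint : ∀ ω, sSup {a : ℝ | ∃ X : Fin k → EuclideanSpace ℝ (Fin N),
      (∀ j, ‖X j‖ = 1) ∧ a = c * ∑ i : Fin k → Fin N, g i ω * ∏ j, X j (i j)}
      ≤ 2 * c * Z ω := by
    intro ω
    apply Real.sSup_le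
    · rintro a ⟨X, hX1, rfl⟩
      have hFX : (∑ i : Fin k → Fin N, g i ω * ∏ j, X j (i j))
          = tCLM k N (fun i => g i ω) X := (tCLM_apply k N _ X).symm
      have h1 : tCLM k N (fun i => g i ω) X ≤ ‖tCLM k N (fun i => g i ω)‖ := by
        have h2 := (tCLM k N (fun i => g i ω)).le_opNorm X
        have h3 : ∏ j, ‖X j‖ = 1 := Finset.prod_eq_one fun j _ => hX1 j
        rw [h3, mul_one] at h2
        exact le_trans (le_abs_self _) h2
      have hnorm : ‖tCLM k N (fun i => g i ω)‖ ≤ 2 * Z ω := by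
        have h4 := opNorm_le_net k N hk (fun i => g i ω) T hTne hT1 hTnet
        have h5 : (Fintype.piFinset fun _ : Fin k => T).sup'
            (Fintype.piFinset_nonempty.mpr fun _ => hTne)
            (fun Y => |tCLM k N (fun i => g i ω) Y|) = Z ω := by
          refine Finset.sup'_congr _ rfl fun Y _ => ?_
          rw [tCLM_apply]
        rw [h5] at h4
        exact h4
      calc c * ∑ i : Fin k → Fin N, g i ω * ∏ j, X j (i j)
          ≤ c * (2 * Z ω) := by
            rw [hFX]
            exact mul_le_mul_of_nonneg_left (le_trans h1 hnorm) hcpos.le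
        _ = 2 * c * Z ω := by ring
    · have := hZ0 ω
      positivity
  -- exponential moment of each W Y for net points
  have hWexp : ∀ (s : ℝ), ∀ Y ∈ 𝒯,
      Integrable (fun ω => rexp (s * W Y ω)) μ ∧
      ∫ ω, rexp (s * W Y ω) ∂μ = rexp (s^2/2) := by
    intro s Y hY
    set a : (Fin k → Fin N) → ℝ := fun i => ∏ j, Y j (i j) with ha
    have hY1 : ∀ j, ‖Y j‖ = 1 := fun j => hT1 _ (Fintype.mem_piFinset.mp hY j)
    have hvar : ∑ i, (a i)^2 = 1 := sum_prod_sq k N Y hY1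
    set X : (Fin k → Fin N) → Ω → ℝ := fun i ω => a i * g i ω with hX
    have hXmeas : ∀ i, Measurable (X i) := fun i => (hgmeas i).const_mul _
    have hXindep : iIndepFun X μ :=
      hgindep.comp (fun i u => a i * u) (fun i => measurable_const_mul _)
    have hXexp : ∀ i, Integrable (fun ω => rexp (s * X i ω)) μ := by
      intro i
      have : (fun ω => rexp (s * X i ω)) = fun ω => rexp ((s * a i) * g i ω) := by
        funext ω; rw [hX]; ring_nf
      rw [this]
      exact hint (s * a i) i
    have hWX : W Y = ∑ i, X i := by
      funext ω
      rw [hW, Finset.sum_apply]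
      exact Finset.sum_congr rfl fun i _ => by rw [hX]; ring
    constructor
    · rw [hWX]
      exact iIndepFun.integrable_exp_mul_sum hXindep hXmeas fun i _ => hXexp i
    · have hmgfX : ∀ i, mgf (X i) μ s = rexp ((s * a i)^2/2) := by
        intro i
        rw [mgf]
        have : (fun ω => rexp (s * X i ω)) = fun ω => rexp ((s * a i) * g i ω) := by
          funext ω; rw [hX]; ring_nf
        calc ∫ ω, rexp (s * X i ω) ∂μ = ∫ ω, rexp ((s * a i) * g i ω) ∂μ := by rw [this]
          _ = rexp ((s * a i)^2/2) := hmgf (s * a i) i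
      have := iIndepFun.mgf_sum hXindep hXmeas Finset.univ (t := s)
      rw [hWX]
      show mgf (∑ i, X i) μ s = rexp (s^2/2)
      rw [this]
      calc ∏ i, mgf (X i) μ s = ∏ i, rexp ((s * a i)^2/2) :=
            Finset.prod_congr rfl fun i _ => hmgfX i
        _ = rexp (∑ i, (s * a i)^2/2) := by rw [← Real.exp_sum]
        _ = rexp (s^2/2) := by
            congr 1
            have : ∑ i, (s * a i)^2/2 = (s^2/2) * ∑ i, (a i)^2 := by
              rw [Finset.mul_sum]
              exact Finset.sum_congr rfl fun i _ => by ring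
            rw [this, hvar, mul_one]
    done
  -- expectation of Z
  set M : ℕ := 𝒯.card with hM
  have hM1 : 1 ≤ M := Finset.card_pos.mpr h𝒯ne
  have hL2 : (2:ℝ) ≤ 2 * M := by
    have : (1:ℝ) ≤ M := by exact_mod_cast hM1
    linarith
  set L : ℝ := Real.log (2 * M) with hL
  have hLpos : 0 < L := Real.log_pos (by linarith)
  set t : ℝ := Real.sqrt (2 * L) with ht
  have htpos : 0 < t := Real.sqrt_pos.mpr (by linarith)
  have ht2 : t^2 = 2 * L := Real.sq_sqrt (by linarith)
  set G : Ω → ℝ := fun ω => ∑ Y ∈ 𝒯, (rexp (t * W Y ω) + rexp (-t * W Y ω)) with hG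
  have hpair : ∀ Y ∈ 𝒯, Integrable (fun ω => rexp (t * W Y ω) + rexp (-t * W Y ω)) μ := by
    intro Y hY
    have h := Integrable.add (hWexp t Y hY).1 (hWexp (-t) Y hY).1
    exact h
  have hGint : Integrable G μ := integrable_finset_sum _ hpair
  have hexpZle : ∀ ω, rexp (t * Z ω) ≤ G ω := by
    intro ω
    obtain ⟨Y0, hY0, hY0eq⟩ := Finset.exists_mem_eq_sup' h𝒯ne (fun Y => |W Y ω|)
    have hZω : Z ω = |W Y0 ω| := hY0eq
    have hstep : rexp (t * |W Y0 ω|) ≤ rexp (t * W Y0 ω) + rexp (-t * W Y0 ω) := by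
      rcases abs_cases (W Y0 ω) with ⟨h, _⟩ | ⟨h, _⟩
      · rw [h]
        exact le_add_of_nonneg_right (Real.exp_pos _).le
      · rw [h]
        have : t * -W Y0 ω = -t * W Y0 ω := by ring
        rw [this]
        exact le_add_of_nonneg_left (Real.exp_pos _).le
    rw [hZω]
    refine le_trans hstep ?_
    exact Finset.single_le_sum (f := fun Y => rexp (t * W Y ω) + rexp (-t * W Y ω))
      (fun Y _ => by positivity) hY0
  have hexpZint : Integrable (fun ω => rexp (t * Z ω)) μ := by
    refine Integrable.mono' hGint ((hZmeas.const_mul t).exp).aestronglyMeasurable ?_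
    filter_upwards with ω
    rw [Real.norm_eq_abs, abs_of_nonneg (Real.exp_pos _).le]
    exact hexpZle ω
  have hGval : ∫ ω, G ω ∂μ = 2 * M * rexp (t^2/2) := by
    rw [hG]
    rw [integral_finset_sum _ hpair]
    have : ∀ Y ∈ 𝒯, ∫ ω, (rexp (t * W Y ω) + rexp (-t * W Y ω)) ∂μ = 2 * rexp (t^2/2) := by
      intro Y hY
      rw [integral_add (hWexp t Y hY).1 (hWexp (-t) Y hY).1]
      rw [(hWexp t Y hY).2, (hWexp (-t) Y hY).2]
      have h3 : (-t)^2 = t^2 := by ring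
      rw [h3]
      ring
    rw [Finset.sum_congr rfl this, Finset.sum_const, nsmul_eq_mul]
    ring
  have hEZ : ∫ ω, Z ω ∂μ ≤ t := by
    have hjensen : rexp (∫ ω, t * Z ω ∂μ) ≤ ∫ ω, rexp (t * Z ω) ∂μ := by
      refine ConvexOn.map_integral_le convexOn_exp continuous_exp.continuousOn
        isClosed_univ (Filter.Eventually.of_forall fun _ => Set.mem_univ _)
        (hZint.const_mul t) ?_
      exact hexpZint
    have h1 : ∫ ω, rexp (t * Z ω) ∂μ ≤ 2 * M * rexp (t^2/2) := by
      rw [← hGval]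
      exact integral_mono hexpZint hGint hexpZle
    have h2 : rexp (∫ ω, t * Z ω ∂μ) ≤ 2 * M * rexp (t^2/2) := le_trans hjensen h1
    have h3 : ∫ ω, t * Z ω ∂μ = t * ∫ ω, Z ω ∂μ := integral_const_mul t Z
    rw [h3] at h2
    have h4 : t * ∫ ω, Z ω ∂μ ≤ Real.log (2 * M * rexp (t^2/2)) := by
      rw [← Real.log_exp (t * ∫ ω, Z ω ∂μ)]
      exact Real.log_le_log (Real.exp_pos _) h2
    rw [Real.log_mul (by linarith) (Real.exp_pos _).ne', Real.log_exp] at h4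
    rw [← hL] at h4
    have h5 : t * ∫ ω, Z ω ∂μ ≤ t * t := by
      have : L + t^2/2 = t * t := by
        have htt : t * t = t^2 := (pow_two t).symm
        rw [htt, ht2]; ring
      linarith
    exact le_of_mul_le_mul_left h5 htpos
  -- bound t by √N √(2D)
  have hTcard' : (T.card : ℝ) ≤ (1 + 4*k)^N := by
    have : (1 + 2/(1/(2*(k:ℝ)))) = 1 + 4*k := by
      rw [div_div_eq_mul_div, div_one, mul_comm]
      ring
    rw [this] at hTcard
    exact hTcard
  have hTcard1 : 1 ≤ T.card := Finset.card_pos.mpr hTne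
  have hMcard : (M:ℝ) = (T.card : ℝ)^k := by
    rw [hM, h𝒯, Fintype.card_piFinset_const]
    push_cast
    ring
  have hLle : L ≤ N * D := by
    have h1 : L = Real.log 2 + Real.log M := by
      rw [hL, Real.log_mul two_ne_zero (by positivity : (M:ℝ) ≠ 0)]
    have h2 : Real.log (M:ℝ) = k * Real.log (T.card : ℝ) := by
      rw [hMcard, Real.log_pow]
    have h3 : Real.log (T.card : ℝ) ≤ N * Real.log (1 + 4*k) := by
      calc Real.log (T.card : ℝ) ≤ Real.log ((1 + 4*(k:ℝ))^N) :=
            Real.log_le_log (by exact_mod_cast hTcard1) hTcard'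
        _ = N * Real.log (1 + 4*k) := by rw [Real.log_pow]
    have h4 : (0:ℝ) ≤ Real.log (1 + 4*k) := Real.log_nonneg (by nlinarith)
    have h5 : (1:ℝ) ≤ N := by exact_mod_cast hN
    have h6 : 0 < Real.log 2 := Real.log_pos (by norm_num)
    rw [hD]
    rw [h1, h2]
    nlinarith [h3]
  have htle : t ≤ Real.sqrt N * Real.sqrt (2 * D) := by
    rw [ht, ← Real.sqrt_mul (by positivity : (0:ℝ) ≤ (N:ℝ))]
    apply Real.sqrt_le_sqrt
    calc 2 * L ≤ 2 * (N * D) := by linarith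
      _ = N * (2 * D) := by ring
  -- final assembly
  have hrpow : c * Real.sqrt N = (N : ℝ) ^ ((1 : ℝ) - k / 2) := by
    rw [hc, Real.sqrt_eq_rpow, ← Real.rpow_add hNpos]
    congr 1
    ring
  by_cases hInt : Integrable (fun ω => sSup {a : ℝ | ∃ X : Fin k → EuclideanSpace ℝ (Fin N),
      (∀ j, ‖X j‖ = 1) ∧
      a = (N : ℝ) ^ (-(((k : ℝ) - 1) / 2)) *
        ∑ i : Fin k → Fin N, g i ω * ∏ j, X j (i j)}) μ
  · calc (∫ ω, sSup {a : ℝ | ∃ X : Fin k → EuclideanSpace ℝ (Fin N),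
            (∀ j, ‖X j‖ = 1) ∧
            a = (N : ℝ) ^ (-(((k : ℝ) - 1) / 2)) *
              ∑ i : Fin k → Fin N, g i ω * ∏ j, X j (i j)} ∂μ)
        ≤ ∫ ω, 2 * c * Z ω ∂μ := by
          refine integral_mono hInt (hZint.const_mul _) fun ω => ?_
          exact hpoint ω
      _ = 2 * c * ∫ ω, Z ω ∂μ := integral_const_mul _ _
      _ ≤ 2 * c * t := by
          apply mul_le_mul_of_nonneg_left hEZ (by positivity)
      _ ≤ 2 * c * (Real.sqrt N * Real.sqrt (2 * D)) := by
          apply mul_le_mul_of_nonneg_left htle (by positivity)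
      _ = 2 * Real.sqrt (2 * D) * (c * Real.sqrt N) := by ring
      _ = 2 * Real.sqrt (2 * D) * (N : ℝ) ^ ((1 : ℝ) - k / 2) := by rw [hrpow]
  · rw [integral_undef hInt]
    have : (0:ℝ) < 2 * Real.sqrt (2 * D) * (N : ℝ) ^ ((1 : ℝ) - k / 2) := by
      have := Real.rpow_pos_of_pos hNpos ((1 : ℝ) - k / 2)
      positivity
    linarith

-- sanity check: the statement elaborates identically without the extra `open`s
example (k : ℕ) (hk : 1 ≤ k) :
    ∃ C > (0 : ℝ), ∀ N : ℕ, 1 ≤ N →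
      ∀ (Ω : Type) (_ : MeasurableSpace Ω) (μ : Measure Ω), IsProbabilityMeasure μ →
      ∀ g : (Fin k → Fin N) → Ω → ℝ,
        (∀ i, Measurable (g i)) →
        (∀ i, Measure.map (g i) μ = gaussianReal 0 1) →
        iIndepFun g μ →
        (∫ ω, sSup {a : ℝ | ∃ X : Fin k → EuclideanSpace ℝ (Fin N),
            (∀ j, ‖X j‖ = 1) ∧
            a = (N : ℝ) ^ (-(((k : ℝ) - 1) / 2)) *
              ∑ i : Fin k → Fin N, g i ω * ∏ j, X j (i j)} ∂μ)
          ≤ C * (N : ℝ) ^ ((1 : ℝ) - k / 2) :=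
  gaussian_tensor_injective_norm k hk
end
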